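/- arXiv:1703.00282 — 4 statements merged into one kernel-verified Lean document; each statement's English description precedes it below -/
import Mathlib

section
/- Let μ be a positive Borel measure on ℝ with μ(ℝ) = ∞ and μ(I) < ∞ for every bounded interval I, let p ≥ 1, and let h : ℝ → [0,∞) be locally p-integrable with sup_{t∈ℝ} ∫_t^{t+1} h(s)^p ds < ∞. Then lim_{r→∞} (1/μ([-r,r])) ∫_{[-r,r]} (∫_0^1 h(t+s)^p ds)^{1/p} dμ(t) = 0 if and only if lim_{r→∞} (1/μ([-r,r])) ∫_{[-r,r]} ∫_0^1 h(t+s)^p ds dμ(t) = 0. -/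
open MeasureTheory Filter Topology


theorem aux_stmt3 (μ : Measure ℝ)
    (hμ2 : ∀ a b : ℝ, μ (Set.Icc a b) < ⊤)
    (p : ℝ) (hp : 1 ≤ p) (F : ℝ → ℝ) (hFcont : Continuous F)
    (hF0 : ∀ t, 0 ≤ F t) (C : ℝ) (hFC : ∀ t, F t ≤ C) :
    Tendsto (fun r : ℝ => (1 / (μ (Set.Icc (-r) r)).toReal) *
        ∫ t in Set.Icc (-r) r, (F t) ^ (1 / p) ∂μ) atTop (𝓝 0)
    ↔ Tendsto (fun r : ℝ => (1 / (μ (Set.Icc (-r) r)).toReal) *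
        ∫ t in Set.Icc (-r) r, F t ∂μ) atTop (𝓝 0) := by
  have hp0 : (0:ℝ) < p := lt_of_lt_of_le one_pos hp
  have hpinv_pos : 0 < 1 / p := by positivity
  have hpinv_le : 1 / p ≤ 1 := by rw [div_le_one hp0]; exact hp
  have hC0 : 0 ≤ C := (hF0 0).trans (hFC 0)
  set G : ℝ → ℝ := fun t => (F t) ^ (1/p) with hGdef
  have hG0 : ∀ t, 0 ≤ G t := fun t => Real.rpow_nonneg (hF0 t) _
  have hGC : ∀ t, G t ≤ C ^ (1/p) := fun t =>
    Real.rpow_le_rpow (hF0 t) (hFC t) hpinv_pos.le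
  have hGcont : Continuous G := hFcont.rpow_const (fun t => Or.inr hpinv_pos.le)
  have hIntC : ∀ (r : ℝ) (c : ℝ), IntegrableOn (fun _ => c) (Set.Icc (-r) r) μ :=
    fun r c => integrableOn_const (hμ2 _ _).ne
  have hIntF : ∀ r : ℝ, IntegrableOn F (Set.Icc (-r) r) μ := fun r =>
    (hIntC r C).mono' hFcont.aestronglyMeasurable
      (Filter.Eventually.of_forall fun t => by
        rw [Real.norm_eq_abs, abs_of_nonneg (hF0 t)]; exact hFC t)
  have hIntG : ∀ r : ℝ, IntegrableOn G (Set.Icc (-r) r) μ := fun r =>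
    (hIntC r (C ^ (1/p))).mono' hGcont.aestronglyMeasurable
      (Filter.Eventually.of_forall fun t => by
        rw [Real.norm_eq_abs, abs_of_nonneg (hG0 t)]; exact hGC t)
  have hAF0 : ∀ r : ℝ, 0 ≤ (1 / (μ (Set.Icc (-r) r)).toReal) *
      ∫ t in Set.Icc (-r) r, F t ∂μ := fun r =>
    mul_nonneg (by positivity) (setIntegral_nonneg measurableSet_Icc fun t _ => hF0 t)
  have hAG0 : ∀ r : ℝ, 0 ≤ (1 / (μ (Set.Icc (-r) r)).toReal) *
      ∫ t in Set.Icc (-r) r, G t ∂μ := fun r =>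
    mul_nonneg (by positivity) (setIntegral_nonneg measurableSet_Icc fun t _ => hG0 t)
  constructor
  · intro H
    have hpt : ∀ t, F t ≤ C ^ (1 - 1/p) * G t := by
      intro t
      have hsum : (1:ℝ)/p + (1 - 1/p) = 1 := by ring
      have h1 : F t = F t ^ (1/p) * F t ^ (1 - 1/p) := by
        rw [← Real.rpow_add' (hF0 t) (by rw [hsum]; norm_num), hsum, Real.rpow_one]
      rw [h1]
      calc F t ^ (1/p) * F t ^ (1 - 1/p)
          ≤ F t ^ (1/p) * C ^ (1 - 1/p) :=
            mul_le_mul_of_nonneg_left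
              (Real.rpow_le_rpow (hF0 t) (hFC t) (by linarith)) (hG0 t)
        _ = C ^ (1 - 1/p) * G t := by rw [mul_comm]
    have key : ∀ r : ℝ, (1 / (μ (Set.Icc (-r) r)).toReal) *
        ∫ t in Set.Icc (-r) r, F t ∂μ ≤
        C ^ (1 - 1/p) * ((1 / (μ (Set.Icc (-r) r)).toReal) *
        ∫ t in Set.Icc (-r) r, G t ∂μ) := by
      intro r
      have hI : ∫ t in Set.Icc (-r) r, F t ∂μ ≤
          ∫ t in Set.Icc (-r) r, C ^ (1 - 1/p) * G t ∂μ :=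
        integral_mono (hIntF r) ((hIntG r).const_mul _) hpt
      rw [integral_const_mul] at hI
      calc (1 / (μ (Set.Icc (-r) r)).toReal) * ∫ t in Set.Icc (-r) r, F t ∂μ
          ≤ (1 / (μ (Set.Icc (-r) r)).toReal) *
            (C ^ (1 - 1/p) * ∫ t in Set.Icc (-r) r, G t ∂μ) :=
            mul_le_mul_of_nonneg_left hI (by positivity)
        _ = C ^ (1 - 1/p) * ((1 / (μ (Set.Icc (-r) r)).toReal) *
            ∫ t in Set.Icc (-r) r, G t ∂μ) := by ring
    exact squeeze_zero hAF0 key (by simpa using H.const_mul (C ^ (1 - 1/p)))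
  · intro H
    rw [NormedAddCommGroup.tendsto_nhds_zero]
    intro δ hδ
    set ε : ℝ := (δ/2) ^ p with hε
    have hε0 : 0 < ε := Real.rpow_pos_of_pos (by linarith) p
    have hεp : ε ^ (1/p) = δ/2 := by
      rw [hε, ← Real.rpow_mul (by linarith : (0:ℝ) ≤ δ/2), mul_one_div,
        div_self hp0.ne', Real.rpow_one]
    set c := ε ^ (1/p - 1) with hc
    have hc0 : 0 ≤ c := Real.rpow_nonneg hε0.le _
    have hpt : ∀ t, G t ≤ ε ^ (1/p) + c * F t := by
      intro t
      rcases le_or_gt (F t) ε with hle | hlt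
      · have h1 : G t ≤ ε ^ (1/p) := Real.rpow_le_rpow (hF0 t) hle hpinv_pos.le
        have h2 : 0 ≤ c * F t := mul_nonneg hc0 (hF0 t)
        linarith
      · have hF' : 0 < F t := hε0.trans hlt
        have h1 : G t = F t * F t ^ (1/p - 1) := by
          have hh := Real.rpow_add hF' 1 (1/p - 1)
          rw [Real.rpow_one] at hh
          calc G t = F t ^ (1 + (1/p - 1)) := by rw [hGdef]; congr 1; ring
            _ = F t * F t ^ (1/p - 1) := hh
        have h2 : F t ^ (1/p - 1) ≤ c :=
          Real.rpow_le_rpow_of_nonpos hε0 hlt.le (by linarith)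
        have h3 : 0 ≤ ε ^ (1/p) := Real.rpow_nonneg hε0.le _
        nlinarith [mul_le_mul_of_nonneg_left h2 hF'.le]
    have havg : ∀ r : ℝ, (1 / (μ (Set.Icc (-r) r)).toReal) *
        ∫ t in Set.Icc (-r) r, G t ∂μ ≤ ε ^ (1/p) +
        c * ((1 / (μ (Set.Icc (-r) r)).toReal) * ∫ t in Set.Icc (-r) r, F t ∂μ) := by
      intro r
      have h3 : ∫ t in Set.Icc (-r) r, G t ∂μ ≤
          ∫ t in Set.Icc (-r) r, (ε^(1/p) + c * F t) ∂μ :=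
        integral_mono (hIntG r) ((hIntC r _).add ((hIntF r).const_mul c)) hpt
      have h4 : ∫ t in Set.Icc (-r) r, (ε^(1/p) + c * F t) ∂μ
          = ε^(1/p) * (μ (Set.Icc (-r) r)).toReal +
            c * ∫ t in Set.Icc (-r) r, F t ∂μ := by
        rw [integral_add (hIntC r _) ((hIntF r).const_mul c), integral_const_mul,
          setIntegral_const, smul_eq_mul, measureReal_def]
        ring
      set m := (μ (Set.Icc (-r) r)).toReal with hm
      by_cases hm0 : m = 0
      · have h5 : 0 ≤ c * ((1/m) * ∫ t in Set.Icc (-r) r, F t ∂μ) :=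
          mul_nonneg hc0 (hAF0 r)
        have h6 : 0 ≤ ε ^ (1/p) := Real.rpow_nonneg hε0.le _
        rw [hm0]
        simp only [div_zero, zero_mul, mul_zero, add_zero]
        exact Real.rpow_nonneg hε0.le _
      · have hmpos : 0 < m := lt_of_le_of_ne ENNReal.toReal_nonneg (Ne.symm hm0)
        calc (1/m) * ∫ t in Set.Icc (-r) r, G t ∂μ
            ≤ (1/m) * (ε^(1/p) * m + c * ∫ t in Set.Icc (-r) r, F t ∂μ) := by
              rw [← h4]; exact mul_le_mul_of_nonneg_left h3 (by positivity)
          _ = ε ^ (1/p) + c * ((1/m) * ∫ t in Set.Icc (-r) r, F t ∂μ) := by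
              field_simp
    have hH : Tendsto (fun r : ℝ => c * ((1 / (μ (Set.Icc (-r) r)).toReal) *
        ∫ t in Set.Icc (-r) r, F t ∂μ)) atTop (𝓝 0) := by
      simpa using H.const_mul c
    filter_upwards [hH.eventually_lt_const (by linarith : (0:ℝ) < δ/2)] with r hr
    rw [Real.norm_eq_abs, abs_of_nonneg (hAG0 r)]
    calc (1 / (μ (Set.Icc (-r) r)).toReal) * ∫ t in Set.Icc (-r) r, G t ∂μ
        ≤ ε ^ (1/p) + c * ((1 / (μ (Set.Icc (-r) r)).toReal) *
          ∫ t in Set.Icc (-r) r, F t ∂μ) := havg r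
      _ < δ := by rw [hεp]; linarith

/-- for a positive Borel measure `μ` on `ℝ` with `μ(ℝ) = ∞` and finite on
bounded intervals, and an `S^p`-bounded nonnegative locally `p`-integrable `h`, the
`μ`-ergodicity of `t ↦ (∫_0^1 h(t+s)^p ds)^{1/p}` is equivalent to the `μ`-ergodicity of
`t ↦ ∫_0^1 h(t+s)^p ds`. -/
theorem stmt3 (μ : Measure ℝ) (hμ1 : μ Set.univ = ⊤)
    (hμ2 : ∀ a b : ℝ, μ (Set.Icc a b) < ⊤)
    (p : ℝ) (hp : 1 ≤ p) (h : ℝ → ℝ) (hm : Measurable h) (h0 : ∀ t, 0 ≤ h t)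
    (hint : ∀ a b : ℝ, IntervalIntegrable (fun t => h t ^ p) volume a b)
    (C : ℝ) (hC : ∀ t : ℝ, (∫ s in t..(t + 1), h s ^ p) ≤ C) :
    Tendsto (fun r : ℝ => (1 / (μ (Set.Icc (-r) r)).toReal) *
        ∫ t in Set.Icc (-r) r, (∫ s in (0:ℝ)..1, h (t + s) ^ p) ^ (1 / p) ∂μ)
      atTop (𝓝 0)
    ↔ Tendsto (fun r : ℝ => (1 / (μ (Set.Icc (-r) r)).toReal) *
        ∫ t in Set.Icc (-r) r, (∫ s in (0:ℝ)..1, h (t + s) ^ p) ∂μ)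
      atTop (𝓝 0) := by
  set F : ℝ → ℝ := fun t => ∫ s in (0:ℝ)..1, h (t + s) ^ p with hFdef
  have hF0 : ∀ t, 0 ≤ F t := fun t =>
    intervalIntegral.integral_nonneg (by norm_num)
      (fun s _ => Real.rpow_nonneg (h0 _) p)
  have htrans : ∀ t, F t = ∫ s in t..(t+1), h s ^ p := by
    intro t
    simpa using intervalIntegral.integral_comp_add_left
      (a := (0:ℝ)) (b := 1) (fun s => h s ^ p) t
  have hFC : ∀ t, F t ≤ C := fun t => (htrans t) ▸ hC t
  have hFcont : Continuous F := by
    have hprim : Continuous fun x => ∫ s in (0:ℝ)..x, h s ^ p :=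
      intervalIntegral.continuous_primitive (fun a b => hint a b) 0
    have heq : ∀ t, F t = (∫ s in (0:ℝ)..(t+1), h s ^ p) - ∫ s in (0:ℝ)..t, h s ^ p := by
      intro t
      rw [htrans t, ← intervalIntegral.integral_interval_sub_left (hint 0 (t+1)) (hint 0 t)]
    rw [show F = fun t => (∫ s in (0:ℝ)..(t+1), h s ^ p) - ∫ s in (0:ℝ)..t, h s ^ p
      from funext heq]
    exact (hprim.comp (continuous_id.add continuous_const)).sub hprim
  exact aux_stmt3 μ hμ2 p hp F hFcont hF0 C hFC
end

section
/- Let p ≥ 1, δ > 0, and let K : ℝ → [0,∞) be an S^p-almost periodic function. Then the function κ(t) = ∫_{-∞}^t e^{-δ(t-s)} K(s)^p ds is Bohr almost periodic (in particular bounded and continuous on ℝ). -/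
open MeasureTheory Filter Topology

/-- A set `A ⊆ ℝ` is relatively dense. -/
def RelDense (A : Set ℝ) : Prop := ∃ l > 0, ∀ a : ℝ, ∃ τ ∈ A, τ ∈ Set.Icc a (a + l)

/-- `f` is Stepanov almost periodic of order `p`. -/
def SpAP {E : Type*} [PseudoMetricSpace E] (p : ℝ) (f : ℝ → E) : Prop :=
  ∀ ε > 0, RelDense {τ : ℝ | ∀ x : ℝ,
    (∫ t in x..(x + 1), dist (f (t + τ)) (f t) ^ p) ^ (1 / p) ≤ ε}

section Aux

open Set

lemma two_rpow_bound {x y p : ℝ} (hx : 0 ≤ x) (hy : 0 ≤ y) (hp : 0 ≤ p) :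
    (x + y) ^ p ≤ 2 ^ p * (x ^ p + y ^ p) := by
  have hm : x + y ≤ 2 * max x y := by
    rcases le_total x y with h | h <;> simp [max_eq_right, max_eq_left, h] <;> linarith
  have h0 : (0:ℝ) ≤ max x y := le_max_of_le_left hx
  calc (x + y) ^ p ≤ (2 * max x y) ^ p :=
        Real.rpow_le_rpow (by linarith) hm hp
    _ = 2 ^ p * (max x y) ^ p := Real.mul_rpow (by norm_num) h0
    _ ≤ 2 ^ p * (x ^ p + y ^ p) := by
        apply mul_le_mul_of_nonneg_left _ (Real.rpow_nonneg (by norm_num) p)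
        rcases le_total x y with h | h
        · rw [max_eq_right h]
          nlinarith [Real.rpow_nonneg hx p]
        · rw [max_eq_left h]
          nlinarith [Real.rpow_nonneg hy p]

lemma key_rpow_bound {p lam a b : ℝ} (hp : 1 ≤ p) (hl : 0 < lam) (ha : 0 ≤ a) (hb : 0 ≤ b) :
    |a ^ p - b ^ p| ≤ ((1 + lam) ^ p - 1) * (a ^ p + b ^ p) + (1 + 1/lam) ^ p * |a - b| ^ p := by
  have h1 : (1:ℝ) ≤ (1 + lam) ^ p := by
    calc (1:ℝ) = 1 ^ p := (Real.one_rpow p).symm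
    _ ≤ (1 + lam) ^ p := Real.rpow_le_rpow (by norm_num) (by linarith) (by linarith)
  have habs : ∀ a b : ℝ, 0 ≤ a → 0 ≤ b → b ≤ a →
      a ^ p - b ^ p ≤ ((1 + lam) ^ p - 1) * (a ^ p + b ^ p) + (1 + 1/lam) ^ p * |a - b| ^ p := by
    intro a b ha hb hba
    set d := a - b with hd
    have hd0 : 0 ≤ d := by linarith
    have habd : |a - b| = d := abs_of_nonneg hd0
    rw [habd]
    have hsum : 0 ≤ a ^ p + b ^ p := add_nonneg (Real.rpow_nonneg ha p) (Real.rpow_nonneg hb p)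
    rcases le_or_gt d (lam * b) with hc | hc
    · have : a ^ p ≤ ((1 + lam) * b) ^ p := by
        apply Real.rpow_le_rpow ha (by nlinarith) (by linarith)
      rw [Real.mul_rpow (by nlinarith) hb] at this
      have h2 : a ^ p - b ^ p ≤ ((1 + lam) ^ p - 1) * b ^ p := by nlinarith
      have h3 : ((1 + lam) ^ p - 1) * b ^ p ≤ ((1 + lam) ^ p - 1) * (a ^ p + b ^ p) := by
        apply mul_le_mul_of_nonneg_left _ (by linarith)
        nlinarith [Real.rpow_nonneg ha p]
      have h4 : 0 ≤ (1 + 1/lam) ^ p * d ^ p :=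
        mul_nonneg (Real.rpow_nonneg (by positivity) p) (Real.rpow_nonneg hd0 p)
      linarith
    · have hb' : b < d / lam := by rw [lt_div_iff₀ hl]; nlinarith
      have : a ^ p ≤ ((1 + 1/lam) * d) ^ p := by
        apply Real.rpow_le_rpow ha _ (by linarith)
        have h5 : a = b + d := by linarith
        rw [h5]
        have h6 : d / lam = (1/lam) * d := by ring
        nlinarith [h6 ▸ hb'.le]
      rw [Real.mul_rpow (by positivity) hd0] at this
      have h4 : 0 ≤ ((1 + lam) ^ p - 1) * (a ^ p + b ^ p) :=
        mul_nonneg (by linarith) hsum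
      nlinarith [Real.rpow_nonneg hb p]
  rcases le_total b a with h | h
  · rw [abs_of_nonneg (by nlinarith [Real.rpow_le_rpow hb h (by linarith : (0:ℝ) ≤ p)])]
    exact habs a b ha hb h
  · rw [abs_of_nonpos (by nlinarith [Real.rpow_le_rpow ha h (by linarith : (0:ℝ) ≤ p)])]
    have := habs b a hb ha h
    rw [abs_sub_comm] at this
    linarith [this]

lemma one_add_rpow_bound {p lam : ℝ} (hp : 1 ≤ p) (h0 : 0 ≤ lam) (h1 : lam ≤ 1) :
    (1 + lam) ^ p - 1 ≤ p * lam * Real.exp p := by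
  have hp0 : (0:ℝ) < p := lt_of_lt_of_le one_pos hp
  have hA : (1 + lam) ^ p ≤ Real.exp (lam * p) := by
    calc (1 + lam) ^ p ≤ Real.exp lam ^ p :=
          Real.rpow_le_rpow (by linarith) (by linarith [Real.add_one_le_exp lam]) hp0.le
      _ = Real.exp (lam * p) := (Real.exp_mul lam p).symm
  have hu0 : 0 ≤ lam * p := mul_nonneg h0 hp0.le
  have hB : Real.exp (lam * p) - 1 ≤ (lam * p) * Real.exp (lam * p) := by
    have h2 := Real.add_one_le_exp (-(lam * p))
    rw [Real.exp_neg] at h2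
    have hE : 0 < Real.exp (lam * p) := Real.exp_pos _
    have h3 : (1 - lam * p) * Real.exp (lam * p) ≤ 1 := by
      calc (1 - lam * p) * Real.exp (lam * p) ≤ (Real.exp (lam * p))⁻¹ * Real.exp (lam * p) :=
            mul_le_mul_of_nonneg_right (by linarith) hE.le
        _ = 1 := inv_mul_cancel₀ hE.ne'
    nlinarith
  have hC : Real.exp (lam * p) ≤ Real.exp p := Real.exp_le_exp.mpr (by nlinarith)
  nlinarith [mul_nonneg hu0 (Real.exp_pos (lam*p)).le]

lemma shift_Iic (f : ℝ → ℝ) (t τ : ℝ) :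
    ∫ s in Iic t, f (s + τ) = ∫ s in Iic (t + τ), f s := by
  rw [← integral_indicator measurableSet_Iic, ← integral_indicator measurableSet_Iic]
  rw [← integral_add_right_eq_self (fun s => (Iic (t + τ)).indicator f s) τ]
  congr 1
  ext u
  by_cases h : u ≤ t
  · rw [indicator_of_mem (by simpa using h), indicator_of_mem (by simp; linarith)]
  · rw [indicator_of_notMem (by simpa using h),
      indicator_of_notMem (by simp at h ⊢; linarith)]

lemma shift_Icc (f : ℝ → ℝ) (a b τ : ℝ) :
    ∫ s in Icc a b, f (s + τ) = ∫ s in Icc (a + τ) (b + τ), f s := by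
  rw [← integral_indicator measurableSet_Icc, ← integral_indicator measurableSet_Icc]
  rw [← integral_add_right_eq_self (fun s => (Icc (a + τ) (b + τ)).indicator f s) τ]
  congr 1
  ext u
  by_cases h : u ∈ Icc a b
  · rw [indicator_of_mem h,
      indicator_of_mem (by simp at h ⊢; constructor <;> linarith [h.1, h.2])]
  · rw [indicator_of_notMem h,
      indicator_of_notMem (by simp at h ⊢; intro h1; have := h (by linarith); linarith)]

lemma integrableOn_comp_add_Icc {f : ℝ → ℝ} {a b τ : ℝ}
    (hf : IntegrableOn f (Icc (a + τ) (b + τ)) volume) :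
    IntegrableOn (fun s => f (s + τ)) (Icc a b) volume := by
  have h1 : Integrable ((Icc (a + τ) (b + τ)).indicator f) volume :=
    (integrable_indicator_iff measurableSet_Icc).2 hf
  have h2 := h1.comp_add_right τ
  have h3 : (fun s => (Icc (a + τ) (b + τ)).indicator f (s + τ))
      = (Icc a b).indicator (fun s => f (s + τ)) := by
    ext u
    by_cases h : u ∈ Icc a b
    · rw [indicator_of_mem (by simp at h ⊢; constructor <;> linarith [h.1, h.2]),
        indicator_of_mem h]
    · rw [indicator_of_notMem (by simp at h ⊢; intro h1; have := h (by linarith); linarith),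
        indicator_of_notMem h]
  rw [h3] at h2
  exact (integrable_indicator_iff measurableSet_Icc).1 h2

lemma tail_bound {δ : ℝ} (hδ : 0 < δ) (c : ℝ → ℝ) (hc0 : ∀ s, 0 ≤ c s) (hcm : Measurable c)
    (B : ℝ) (hB : 0 ≤ B)
    (hbd : ∀ x : ℝ, ∫⁻ s in Icc x (x+1), ENNReal.ofReal (c s) ≤ ENNReal.ofReal B)
    (t : ℝ) :
    IntegrableOn (fun s => Real.exp (-δ * (t - s)) * c s) (Iic t) volume ∧
    ∫ s in Iic t, Real.exp (-δ * (t - s)) * c s ≤ B / (1 - Real.exp (-δ)) := by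
  set f : ℝ → ℝ := fun s => Real.exp (-δ * (t - s)) * c s with hf
  have hf0 : ∀ s, 0 ≤ f s := fun s => mul_nonneg (Real.exp_nonneg _) (hc0 s)
  have hfm : Measurable f := (Real.measurable_exp.comp (by fun_prop)).mul hcm
  have he1 : Real.exp (-δ) < 1 := Real.exp_lt_one_iff.mpr (by linarith)
  have hepos : (0:ℝ) < 1 - Real.exp (-δ) := by linarith
  set r : ENNReal := ENNReal.ofReal (Real.exp (-δ)) with hr
  have hsub : Iic t ⊆ ⋃ n : ℕ, Icc (t - ((n:ℝ)+1)) (t - n) := by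
    intro s hs
    simp only [mem_Iic] at hs
    refine Set.mem_iUnion.2 ⟨⌊t - s⌋₊, ?_⟩
    have h1 : (⌊t-s⌋₊ : ℝ) ≤ t - s := Nat.floor_le (by linarith)
    have h2 : t - s < ⌊t-s⌋₊ + 1 := Nat.lt_floor_add_one _
    constructor <;> linarith
  have hpiece : ∀ n : ℕ, ∫⁻ s in Icc (t - ((n:ℝ)+1)) (t - n), ENNReal.ofReal (f s)
      ≤ r ^ n * ENNReal.ofReal B := by
    intro n
    have hmono : ∀ s ∈ Icc (t - ((n:ℝ)+1)) (t - n), ENNReal.ofReal (f s)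
        ≤ ENNReal.ofReal (Real.exp (-δ) ^ n) * ENNReal.ofReal (c s) := by
      intro s hs
      rw [← ENNReal.ofReal_mul (by positivity)]
      apply ENNReal.ofReal_le_ofReal
      apply mul_le_mul_of_nonneg_right _ (hc0 s)
      rw [← Real.exp_nat_mul]
      apply Real.exp_le_exp.mpr
      have hn : (n:ℝ) ≤ t - s := by simp only [mem_Icc] at hs; linarith [hs.2]
      nlinarith [hδ.le]
    calc ∫⁻ s in Icc (t - ((n:ℝ)+1)) (t - n), ENNReal.ofReal (f s)
        ≤ ∫⁻ s in Icc (t - ((n:ℝ)+1)) (t - n),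
            ENNReal.ofReal (Real.exp (-δ) ^ n) * ENNReal.ofReal (c s) :=
          setLIntegral_mono (by fun_prop) hmono
      _ = ENNReal.ofReal (Real.exp (-δ) ^ n) * ∫⁻ s in Icc (t - ((n:ℝ)+1)) (t - n),
            ENNReal.ofReal (c s) := lintegral_const_mul _ (by fun_prop)
      _ ≤ ENNReal.ofReal (Real.exp (-δ) ^ n) * ENNReal.ofReal B := by
          apply mul_le_mul_right
          have h5 : Icc (t - ((n:ℝ)+1)) (t - n) = Icc (t - ((n:ℝ)+1)) ((t - ((n:ℝ)+1)) + 1) := by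
            congr 1
            ring
          rw [h5]; exact hbd _
      _ = r ^ n * ENNReal.ofReal B := by
          rw [hr, ← ENNReal.ofReal_pow (Real.exp_nonneg _)]
  have key : ∫⁻ s in Iic t, ENNReal.ofReal (f s)
      ≤ ENNReal.ofReal (B / (1 - Real.exp (-δ))) := by
    calc ∫⁻ s in Iic t, ENNReal.ofReal (f s)
        ≤ ∫⁻ s in ⋃ n : ℕ, Icc (t - ((n:ℝ)+1)) (t - n), ENNReal.ofReal (f s) :=
          lintegral_mono_set hsub
      _ ≤ ∑' n : ℕ, ∫⁻ s in Icc (t - ((n:ℝ)+1)) (t - n), ENNReal.ofReal (f s) :=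
          lintegral_iUnion_le _ _
      _ ≤ ∑' n : ℕ, r ^ n * ENNReal.ofReal B := ENNReal.tsum_le_tsum hpiece
      _ = (1 - r)⁻¹ * ENNReal.ofReal B := by rw [ENNReal.tsum_mul_right, ENNReal.tsum_geometric]
      _ = ENNReal.ofReal (B / (1 - Real.exp (-δ))) := by
          rw [hr, ← ENNReal.ofReal_one, ← ENNReal.ofReal_sub _ (Real.exp_nonneg _),
            ← ENNReal.ofReal_inv_of_pos hepos, ← ENNReal.ofReal_mul (by positivity)]
          congr 1
          field_simp
  have hint : IntegrableOn f (Iic t) volume := by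
    refine ⟨hfm.aestronglyMeasurable, ?_⟩
    rw [hasFiniteIntegral_iff_ofReal (Filter.Eventually.of_forall hf0)]
    exact lt_of_le_of_lt key ENNReal.ofReal_lt_top
  refine ⟨hint, ?_⟩
  rw [integral_eq_lintegral_of_nonneg_ae (Filter.Eventually.of_forall hf0)
    hfm.aestronglyMeasurable]
  exact ENNReal.toReal_le_of_le_ofReal (by positivity) key

lemma window_dp {p : ℝ} (hp : 1 ≤ p) (K : ℝ → ℝ) {τ ε : ℝ} (hε : 0 ≤ ε)
    (hτ : ∀ x : ℝ, (∫ t in x..(x + 1), dist (K (t + τ)) (K t) ^ p) ^ (1 / p) ≤ ε) (x : ℝ) :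
    ∫ t in Icc x (x+1), |K (t + τ) - K t| ^ p ≤ ε ^ p := by
  have hp0 : (0:ℝ) < p := lt_of_lt_of_le one_pos hp
  have h := hτ x
  rw [intervalIntegral.integral_of_le (by linarith : x ≤ x + 1)] at h
  have hIcc : ∫ t in Icc x (x+1), |K (t + τ) - K t| ^ p
      = ∫ t in Ioc x (x+1), dist (K (t+τ)) (K t) ^ p := by
    rw [integral_Icc_eq_integral_Ioc]
    simp [Real.dist_eq]
  rw [hIcc]
  set I := ∫ t in Ioc x (x+1), dist (K (t+τ)) (K t) ^ p with hI
  have hI0 : 0 ≤ I := setIntegral_nonneg measurableSet_Ioc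
    (fun t _ => Real.rpow_nonneg dist_nonneg p)
  have h2 : (I ^ (1/p)) ^ p ≤ ε ^ p :=
    Real.rpow_le_rpow (Real.rpow_nonneg hI0 _) h hp0.le
  calc I = I ^ ((1/p) * p) := by
        rw [one_div_mul_cancel hp0.ne', Real.rpow_one]
    _ = (I ^ (1/p)) ^ p := Real.rpow_mul hI0 _ _
    _ ≤ ε ^ p := h2

end Aux

open Set

set_option maxHeartbeats 2000000 in
/-- if `K : ℝ → [0,∞)` is `S^p`-almost periodic and `δ > 0`, then
`κ(t) = ∫_{-∞}^t e^{-δ(t-s)} K(s)^p ds` is Bohr almost periodic: it is continuous, bounded,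
and for every `ε > 0` the set of `τ` with `sup_t |κ(t+τ) - κ(t)| < ε` is relatively dense. -/
theorem stmt8 (p δ : ℝ) (hp : 1 ≤ p) (hδ : 0 < δ)
    (K : ℝ → ℝ) (hK0 : ∀ t, 0 ≤ K t) (hKm : Measurable K)
    (hKint : ∀ a b : ℝ, IntervalIntegrable (fun t => K t ^ p) volume a b)
    (hKap : SpAP p K) :
    Continuous (fun t : ℝ => ∫ s in Set.Iic t, Real.exp (-δ * (t - s)) * K s ^ p) ∧
    (∃ C : ℝ, ∀ t : ℝ, |∫ s in Set.Iic t, Real.exp (-δ * (t - s)) * K s ^ p| ≤ C) ∧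
    (∀ ε > 0, RelDense {τ : ℝ | ∃ c, c < ε ∧ ∀ t : ℝ,
      |(∫ s in Set.Iic (t + τ), Real.exp (-δ * (t + τ - s)) * K s ^ p) -
        ∫ s in Set.Iic t, Real.exp (-δ * (t - s)) * K s ^ p| ≤ c}) := by
  have hp0 : (0:ℝ) < p := lt_of_lt_of_le one_pos hp
  have hg0 : ∀ s : ℝ, 0 ≤ K s ^ p := fun s => Real.rpow_nonneg (hK0 s) p
  have hgm : Measurable fun s : ℝ => K s ^ p := by fun_prop
  have hgτm : ∀ τ : ℝ, Measurable fun s : ℝ => K (s + τ) ^ p := by intro τ; fun_prop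
  have hdm : ∀ τ : ℝ, Measurable fun t : ℝ => |K (t + τ) - K t| ^ p := by intro τ; fun_prop
  have hgIcc : ∀ a b : ℝ, IntegrableOn (fun s => K s ^ p) (Icc a b) volume := by
    intro a b
    rcases le_or_gt a b with h | h
    · exact Iff.mpr integrableOn_Icc_iff_integrableOn_Ioc (hKint a b).1
    · rw [Icc_eq_empty (not_le.2 h)]; exact integrableOn_empty
  have hgτIcc : ∀ (τ x : ℝ), IntegrableOn (fun s => K (s + τ) ^ p) (Icc x (x+1)) volume :=
    fun τ x => integrableOn_comp_add_Icc (hgIcc (x+τ) (x+1+τ))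
  have hdineq : ∀ (τ t : ℝ), K t ^ p ≤ 2 ^ p * (K (t + τ) ^ p + |K (t + τ) - K t| ^ p) := by
    intro τ t
    have h1 : K t ≤ K (t + τ) + |K (t + τ) - K t| := by
      have := le_abs_self (K t - K (t + τ))
      rw [abs_sub_comm] at this
      linarith
    calc K t ^ p ≤ (K (t + τ) + |K (t + τ) - K t|) ^ p :=
          Real.rpow_le_rpow (hK0 t) h1 hp0.le
      _ ≤ 2 ^ p * (K (t + τ) ^ p + |K (t + τ) - K t| ^ p) :=
          two_rpow_bound (hK0 _) (abs_nonneg _) hp0.le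
  have hdint : ∀ (τ x : ℝ), IntegrableOn (fun t => |K (t + τ) - K t| ^ p) (Icc x (x+1)) volume := by
    intro τ x
    refine Integrable.mono (((hgτIcc τ x).add (hgIcc x (x+1))).const_mul (2^p))
      ((hdm τ).aestronglyMeasurable) (Filter.Eventually.of_forall fun t => ?_)
    simp only [Pi.add_apply]
    have h1 : |K (t + τ) - K t| ≤ K (t + τ) + K t := by
      have := abs_sub_abs_le_abs_sub (K (t+τ)) (K t)
      have h2 := abs_sub (K (t+τ)) (K t)
      calc |K (t + τ) - K t| ≤ |K (t+τ)| + |K t| := abs_sub _ _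
        _ = K (t + τ) + K t := by rw [abs_of_nonneg (hK0 _), abs_of_nonneg (hK0 _)]
    have h2 : |K (t + τ) - K t| ^ p ≤ 2 ^ p * (K (t+τ) ^ p + K t ^ p) := by
      calc |K (t + τ) - K t| ^ p ≤ (K (t+τ) + K t) ^ p :=
            Real.rpow_le_rpow (abs_nonneg _) h1 hp0.le
        _ ≤ 2 ^ p * (K (t+τ) ^ p + K t ^ p) := two_rpow_bound (hK0 _) (hK0 _) hp0.le
    have h3 : (0:ℝ) ≤ 2 ^ p * (K (t+τ) ^ p + K t ^ p) :=
      mul_nonneg (Real.rpow_nonneg (by norm_num) p) (add_nonneg (hg0 _) (hg0 _))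
    rw [Real.norm_eq_abs, Real.norm_eq_abs, abs_of_nonneg (Real.rpow_nonneg (abs_nonneg _) p),
      abs_of_nonneg h3]
    exact h2
  -- the uniform window bound M
  obtain ⟨l1, hl1, hS1⟩ := hKap 1 one_pos
  set M0 : ℝ := ∫ s in Icc (0:ℝ) (l1+1), K s ^ p with hM0def
  have hM00 : 0 ≤ M0 := setIntegral_nonneg measurableSet_Icc fun s _ => hg0 s
  set M : ℝ := 2 ^ p * (M0 + 1) with hMdef
  have hMnn : 0 ≤ M := mul_nonneg (Real.rpow_nonneg (by norm_num) p) (by linarith)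
  have hM : ∀ x : ℝ, ∫ s in Icc x (x+1), K s ^ p ≤ M := by
    intro x
    obtain ⟨τ, hτS, hτm⟩ := hS1 (-x)
    simp only [Set.mem_setOf_eq] at hτS
    obtain ⟨hτ1, hτ2⟩ := hτm
    have hdbd : ∫ t in Icc x (x+1), |K (t + τ) - K t| ^ p ≤ 1 := by
      have := window_dp hp K zero_le_one hτS x
      rwa [Real.one_rpow] at this
    have hgτbd : ∫ s in Icc x (x+1), K (s + τ) ^ p ≤ M0 := by
      rw [shift_Icc (fun s => K s ^ p) x (x+1) τ]
      apply setIntegral_mono_set (hgIcc 0 (l1+1))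
        (Filter.Eventually.of_forall fun s => hg0 s)
      apply HasSubset.Subset.eventuallyLE
      apply Icc_subset_Icc <;> linarith
    have hsumM : IntegrableOn (fun s : ℝ => K (s + τ) ^ p + |K (s + τ) - K s| ^ p)
        (Icc x (x+1)) volume := (hgτIcc τ x).add (hdint τ x)
    have hrhsM : IntegrableOn (fun s : ℝ => 2 ^ p * (K (s + τ) ^ p + |K (s + τ) - K s| ^ p))
        (Icc x (x+1)) volume := hsumM.const_mul _
    calc ∫ s in Icc x (x+1), K s ^ p
        ≤ ∫ s in Icc x (x+1), 2 ^ p * (K (s + τ) ^ p + |K (s + τ) - K s| ^ p) := by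
          apply integral_mono (hgIcc x (x+1)) hrhsM
          exact fun t => hdineq τ t
      _ = 2 ^ p * ((∫ s in Icc x (x+1), K (s + τ) ^ p)
            + ∫ s in Icc x (x+1), |K (s + τ) - K s| ^ p) := by
          rw [integral_const_mul, integral_add (hgτIcc τ x) (hdint τ x)]
      _ ≤ 2 ^ p * (M0 + 1) := by
          apply mul_le_mul_of_nonneg_left _ (Real.rpow_nonneg (by norm_num) p)
          linarith
  have hMτ : ∀ (τ x : ℝ), ∫ s in Icc x (x+1), K (s + τ) ^ p ≤ M := by
    intro τ x
    rw [shift_Icc (fun s => K s ^ p) x (x+1) τ, show x + 1 + τ = (x + τ) + 1 by ring]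
    exact hM (x + τ)
  have hlwin : ∀ x : ℝ, ∫⁻ s in Icc x (x+1), ENNReal.ofReal (K s ^ p) ≤ ENNReal.ofReal M := by
    intro x
    rw [← ofReal_integral_eq_lintegral_ofReal (hgIcc x (x+1))
      (Filter.Eventually.of_forall fun s => hg0 s)]
    exact ENNReal.ofReal_le_ofReal (hM x)
  have hlwinτ : ∀ (τ x : ℝ), ∫⁻ s in Icc x (x+1), ENNReal.ofReal (K (s + τ) ^ p)
      ≤ ENNReal.ofReal M := by
    intro τ x
    rw [← ofReal_integral_eq_lintegral_ofReal (hgτIcc τ x)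
      (Filter.Eventually.of_forall fun s => hg0 _)]
    exact ENNReal.ofReal_le_ofReal (hMτ τ x)
  have htail := fun t => tail_bound hδ (fun s => K s ^ p) hg0 hgm M hMnn hlwin t
  have htailτ := fun (τ t : ℝ) => tail_bound hδ (fun s => K (s + τ) ^ p) (fun s => hg0 _)
    (hgτm τ) M hMnn (hlwinτ τ) t
  have he1 : Real.exp (-δ) < 1 := Real.exp_lt_one_iff.mpr (by linarith)
  have hepos : (0:ℝ) < 1 - Real.exp (-δ) := by linarith
  refine ⟨?_, ?_, ?_⟩
  · -- continuity
    have hIic : ∀ u : ℝ, IntegrableOn (fun s => Real.exp (δ*s) * K s ^ p) (Iic u) volume := by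
      intro u
      have h2 := ((htail u).1).const_mul (Real.exp (δ*u))
      apply h2.congr
      apply Filter.Eventually.of_forall
      intro s
      show Real.exp (δ*u) * (Real.exp (-δ * (u - s)) * K s ^ p) = Real.exp (δ*s) * K s ^ p
      rw [← mul_assoc, ← Real.exp_add]
      ring_nf
    have hhint : ∀ a b : ℝ, IntervalIntegrable (fun s => Real.exp (δ*s) * K s ^ p) volume a b :=
      fun a b => (hKint a b).continuousOn_mul (Real.continuous_exp.comp (by continuity)).continuousOn
    have hκeq : (fun t : ℝ => ∫ s in Iic t, Real.exp (-δ*(t-s)) * K s ^ p)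
        = fun t : ℝ => Real.exp (-δ*t) * ((∫ s in Iic (0:ℝ), Real.exp (δ*s) * K s ^ p)
            + ∫ s in (0:ℝ)..t, Real.exp (δ*s) * K s ^ p) := by
      funext t
      have h3 := intervalIntegral.integral_Iic_sub_Iic (hIic 0) (hIic t)
      have h4 : ∫ s in Iic t, Real.exp (-δ*(t-s)) * K s ^ p
          = Real.exp (-δ*t) * ∫ s in Iic t, Real.exp (δ*s) * K s ^ p := by
        rw [← integral_const_mul]
        apply setIntegral_congr_fun measurableSet_Iic
        intro s _
        show Real.exp (-δ*(t-s)) * K s ^ p = Real.exp (-δ*t) * (Real.exp (δ*s) * K s ^ p)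
        rw [← mul_assoc, ← Real.exp_add]
        ring_nf
      rw [h4]
      congr 1
      linarith
    rw [hκeq]
    exact ((Real.continuous_exp.comp (by continuity)).mul
      (continuous_const.add (intervalIntegral.continuous_primitive hhint 0)))
  · -- boundedness
    refine ⟨M / (1 - Real.exp (-δ)), fun t => ?_⟩
    rw [abs_of_nonneg (setIntegral_nonneg measurableSet_Iic fun s _ =>
      mul_nonneg (Real.exp_nonneg _) (hg0 s))]
    exact (htail t).2
  · -- almost periodicity
    intro ε hε
    set η : ℝ := (ε/2) * (1 - Real.exp (-δ)) with hηdef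
    have hη : 0 < η := by positivity
    set P : ℝ := p * Real.exp p with hPdef
    have hP : 0 < P := mul_pos hp0 (Real.exp_pos p)
    set lam : ℝ := min 1 (η / (2*(2*M+1)*P)) with hlamdef
    have hQ : (0:ℝ) < 2*(2*M+1)*P := by positivity
    have hlam0 : 0 < lam := lt_min one_pos (by positivity)
    have hlam1 : lam ≤ 1 := min_le_left _ _
    have hlamQ : lam * (2*(2*M+1)*P) ≤ η := by
      have := min_le_right 1 (η / (2*(2*M+1)*P))
      calc lam * (2*(2*M+1)*P) ≤ (η / (2*(2*M+1)*P)) * (2*(2*M+1)*P) :=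
            mul_le_mul_of_nonneg_right this hQ.le
        _ = η := by field_simp
    have hc1bd : ((1 + lam) ^ p - 1) * (2*M) ≤ η/2 := by
      have h7 := one_add_rpow_bound hp hlam0.le hlam1
      have h8 : ((1 + lam) ^ p - 1) * (2*M) ≤ (p * lam * Real.exp p) * (2*M) :=
        mul_le_mul_of_nonneg_right h7 (by linarith)
      have h9 : (p * lam * Real.exp p) * (2*M) = lam * P * (2*M) := by rw [hPdef]; ring
      nlinarith [mul_nonneg (mul_nonneg hlam0.le hP.le) hMnn]
    have hc1nn : 0 ≤ (1 + lam) ^ p - 1 := by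
      have : (1:ℝ) = 1 ^ p := (Real.one_rpow p).symm
      nlinarith [Real.rpow_le_rpow (by norm_num : (0:ℝ) ≤ 1) (by linarith : (1:ℝ) ≤ 1 + lam) hp0.le,
        Real.one_rpow p]
    set c2 : ℝ := (1 + 1/lam) ^ p with hc2def
    have hc2pos : 0 < c2 := Real.rpow_pos_of_pos (by positivity) p
    set ε' : ℝ := (η / (2*c2)) ^ (1/p) with hε'def
    have hε'pos : 0 < ε' := Real.rpow_pos_of_pos (by positivity) _
    have hε'p : ε' ^ p = η / (2*c2) := by
      rw [hε'def, ← Real.rpow_mul (by positivity), one_div_mul_cancel hp0.ne', Real.rpow_one]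
    obtain ⟨l, hl0, hS⟩ := hKap ε' hε'pos
    refine ⟨l, hl0, fun a => ?_⟩
    obtain ⟨τ, hτS, hτm⟩ := hS a
    simp only [Set.mem_setOf_eq] at hτS
    refine ⟨τ, ?_, hτm⟩
    simp only [Set.mem_setOf_eq]
    refine ⟨ε/2, by linarith, fun t => ?_⟩
    -- window bound for the difference
    have habsint : ∀ x : ℝ, IntegrableOn (fun s => |K (s + τ) ^ p - K s ^ p|) (Icc x (x+1))
        volume := by
      intro x
      refine Integrable.mono ((hgτIcc τ x).add (hgIcc x (x+1)))
        (((hgτm τ).sub hgm).abs.aestronglyMeasurable)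
        (Filter.Eventually.of_forall fun s => ?_)
      simp only [Pi.add_apply]
      rw [Real.norm_eq_abs, Real.norm_eq_abs, abs_abs,
        abs_of_nonneg (add_nonneg (hg0 _) (hg0 _))]
      calc |K (s + τ) ^ p - K s ^ p| ≤ |K (s + τ) ^ p| + |K s ^ p| := abs_sub _ _
        _ = K (s + τ) ^ p + K s ^ p := by
            rw [abs_of_nonneg (hg0 _), abs_of_nonneg (hg0 _)]
    have hwreal : ∀ x : ℝ, ∫ s in Icc x (x+1), |K (s + τ) ^ p - K s ^ p| ≤ η := by
      intro x
      have hdbd := window_dp hp K hε'pos.le hτS x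
      have hint1 : IntegrableOn (fun s : ℝ => K (s+τ) ^ p + K s ^ p) (Icc x (x+1)) volume :=
        (hgτIcc τ x).add (hgIcc x (x+1))
      have hint2 : IntegrableOn (fun s : ℝ => ((1 + lam) ^ p - 1) * (K (s+τ) ^ p + K s ^ p))
          (Icc x (x+1)) volume := hint1.const_mul _
      have hint3 : IntegrableOn (fun s : ℝ => c2 * |K (s + τ) - K s| ^ p)
          (Icc x (x+1)) volume := (hdint τ x).const_mul _
      have hrhsint : IntegrableOn (fun s : ℝ => ((1 + lam) ^ p - 1) * (K (s+τ) ^ p + K s ^ p)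
          + c2 * |K (s + τ) - K s| ^ p) (Icc x (x+1)) volume := hint2.add hint3
      calc ∫ s in Icc x (x+1), |K (s + τ) ^ p - K s ^ p|
          ≤ ∫ s in Icc x (x+1), (((1 + lam) ^ p - 1) * (K (s+τ) ^ p + K s ^ p)
              + c2 * |K (s + τ) - K s| ^ p) := by
            apply integral_mono (habsint x) hrhsint
            intro s
            exact key_rpow_bound hp hlam0 (hK0 _) (hK0 _)
        _ = ((1 + lam) ^ p - 1) * ((∫ s in Icc x (x+1), K (s+τ) ^ p)
              + ∫ s in Icc x (x+1), K s ^ p)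
            + c2 * ∫ s in Icc x (x+1), |K (s + τ) - K s| ^ p := by
            rw [integral_add hint2 hint3, integral_const_mul, integral_const_mul,
              integral_add (hgτIcc τ x) (hgIcc x (x+1))]
        _ ≤ ((1 + lam) ^ p - 1) * (2*M) + c2 * (ε' ^ p) := by
            have hb1 : (∫ s in Icc x (x+1), K (s+τ) ^ p) + ∫ s in Icc x (x+1), K s ^ p
                ≤ 2*M := by linarith [hMτ τ x, hM x]
            have hb2 : c2 * (∫ s in Icc x (x+1), |K (s + τ) - K s| ^ p) ≤ c2 * ε' ^ p :=
              mul_le_mul_of_nonneg_left hdbd hc2pos.le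
            have hb3 := mul_le_mul_of_nonneg_left hb1 hc1nn
            linarith
        _ ≤ η := by
            rw [hε'p]
            have : c2 * (η / (2*c2)) = η/2 := by field_simp
            linarith [hc1bd, this.le, this.ge]
    have hwlin : ∀ x : ℝ, ∫⁻ s in Icc x (x+1), ENNReal.ofReal (|K (s + τ) ^ p - K s ^ p|)
        ≤ ENNReal.ofReal η := by
      intro x
      rw [← ofReal_integral_eq_lintegral_ofReal (habsint x)
        (Filter.Eventually.of_forall fun s => abs_nonneg _)]
      exact ENNReal.ofReal_le_ofReal (hwreal x)
    have hdiff := tail_bound hδ (fun s => |K (s + τ) ^ p - K s ^ p|)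
      (fun s => abs_nonneg _) (((hgτm τ).sub hgm).abs) η hη.le hwlin t
    -- rewrite the shifted integral
    have hshift : ∫ s in Iic (t+τ), Real.exp (-δ*(t + τ - s)) * K s ^ p
        = ∫ s in Iic t, Real.exp (-δ*(t-s)) * K (s + τ) ^ p := by
      rw [← shift_Iic (fun s => Real.exp (-δ*(t + τ - s)) * K s ^ p) t τ]
      apply setIntegral_congr_fun measurableSet_Iic
      intro s _
      show Real.exp (-δ*(t + τ - (s + τ))) * K (s + τ) ^ p
          = Real.exp (-δ*(t-s)) * K (s + τ) ^ p
      rw [show t + τ - (s + τ) = t - s by ring]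
    rw [hshift, ← integral_sub (htailτ τ t).1 (htail t).1]
    have habs : |∫ s in Iic t, (Real.exp (-δ*(t-s)) * K (s + τ) ^ p
        - Real.exp (-δ*(t-s)) * K s ^ p)|
        ≤ ∫ s in Iic t, Real.exp (-δ*(t-s)) * |K (s + τ) ^ p - K s ^ p| := by
      have h1 := norm_integral_le_integral_norm (μ := volume.restrict (Iic t))
        (f := fun s => Real.exp (-δ*(t-s)) * K (s + τ) ^ p - Real.exp (-δ*(t-s)) * K s ^ p)
      rw [Real.norm_eq_abs] at h1
      refine h1.trans (le_of_eq ?_)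
      apply setIntegral_congr_fun measurableSet_Iic
      intro s _
      show ‖Real.exp (-δ*(t-s)) * K (s + τ) ^ p - Real.exp (-δ*(t-s)) * K s ^ p‖
          = Real.exp (-δ*(t-s)) * |K (s + τ) ^ p - K s ^ p|
      rw [Real.norm_eq_abs, ← mul_sub, abs_mul, abs_of_nonneg (Real.exp_nonneg _)]
    refine habs.trans ?_
    have h2 := hdiff.2
    have h3 : η / (1 - Real.exp (-δ)) = ε/2 := by
      rw [hηdef]; field_simp
    linarith [h2, h3.le, h3.ge]
end

section
/- Let μ be a positive Borel measure on ℝ with μ(ℝ) = ∞ and μ(I) < ∞ for every bounded interval I, satisfying condition (H). Let 𝕏 be a Banach space, L ≥ 0, and let F, F₁ : ℝ × 𝕏 → 𝕏 be such that for every x ∈ 𝕏: F₁(·,x) is Bohr almost periodic, F(·,x) is bounded and continuous, and the function t ↦ ‖F(t,x) - F₁(t,x)‖ is μ-ergodic. If ‖F(t,x) - F(t,y)‖ ≤ L‖x-y‖ for all t ∈ ℝ and x, y ∈ 𝕏, then also ‖F₁(t,x) - F₁(t,y)‖ ≤ L‖x-y‖ for all t ∈ ℝ and x, y ∈ 𝕏.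 -/
set_option maxHeartbeats 1000000

open MeasureTheory Filter Topology
open scoped ENNReal NNReal

/-- Condition (H) on the measure `μ`. -/
def CondH (μ : Measure ℝ) : Prop :=
  ∀ τ : ℝ, ∃ β > (0:ℝ), ∃ a b : ℝ, ∀ A : Set ℝ, MeasurableSet A → A ∩ Set.Icc a b = ∅ →
    μ ((fun t => t + τ) '' A) ≤ ENNReal.ofReal β * μ A

/-- `φ : ℝ → ℝ` is `μ`-ergodic. -/
def MuErgodic (μ : Measure ℝ) (φ : ℝ → ℝ) : Prop :=
  Tendsto (fun r : ℝ => (1 / (μ (Set.Icc (-r) r)).toReal) *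
      ∫ t in Set.Icc (-r) r, φ t ∂μ) atTop (𝓝 0)

section Aux

variable {X Y : Type*} [NormedAddCommGroup X] [NormedAddCommGroup Y]

/-- Bohr almost periodicity in the form used in the statement. -/
def APprop (u : ℝ → X) : Prop :=
  ∀ ε > (0:ℝ), RelDense {τ : ℝ | ∃ c, c < ε ∧ ∀ t : ℝ, ‖u (t + τ) - u t‖ ≤ c}

lemma APprop.unif_cont {u : ℝ → X} (hc : Continuous u) (hap : APprop u) :
    ∀ ε > (0:ℝ), ∃ δ > (0:ℝ), ∀ s s' : ℝ, |s - s'| ≤ δ → ‖u s - u s'‖ ≤ ε := by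
  intro ε hε
  obtain ⟨l, hl, hT⟩ := hap (ε/3) (by linarith)
  -- uniform continuity on compact [-1, l+1]
  have hucK : UniformContinuousOn u (Set.Icc (-1) (l+1)) :=
    (isCompact_Icc).uniformContinuousOn_of_continuous hc.continuousOn
  rw [Metric.uniformContinuousOn_iff] at hucK
  obtain ⟨δ, hδ, hδK⟩ := hucK (ε/3) (by linarith)
  refine ⟨min (δ/2) 1, by positivity, fun s s' hss => ?_⟩
  obtain ⟨τ, hτT, hτI⟩ := hT (-s)
  obtain ⟨c, hcε, hcb⟩ := hτT
  have h1 : s + τ ∈ Set.Icc (-1:ℝ) (l+1) := by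
    constructor <;> [linarith [hτI.1]; linarith [hτI.2]]
  have h2 : s' + τ ∈ Set.Icc (-1:ℝ) (l+1) := by
    have h3 : |s - s'| ≤ 1 := le_trans hss (min_le_right _ _)
    rw [abs_le] at h3
    constructor <;> [linarith [hτI.1]; linarith [hτI.2]]
  have h4 : dist (s+τ) (s'+τ) < δ := by
    rw [Real.dist_eq]
    have : |s - s'| ≤ δ/2 := le_trans hss (min_le_left _ _)
    have : s + τ - (s' + τ) = s - s' := by ring
    rw [this]; linarith
  have h5 : dist (u (s+τ)) (u (s'+τ)) < ε/3 := hδK _ h1 _ h2 h4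
  rw [dist_eq_norm] at h5
  calc ‖u s - u s'‖ ≤ ‖u (s+τ) - u s‖ + ‖u (s+τ) - u (s'+τ)‖ + ‖u (s'+τ) - u s'‖ := by
        have : u s - u s' = -(u (s+τ) - u s) + (u (s+τ) - u (s'+τ)) + (u (s'+τ) - u s') := by abel
        rw [this]
        refine le_trans (norm_add_le _ _) (add_le_add (le_trans (norm_add_le _ _) ?_) le_rfl)
        rw [norm_neg]
    _ ≤ c + ε/3 + c :=
        add_le_add (add_le_add (hcb s) h5.le) (hcb s')
    _ ≤ ε := by linarith

lemma APprop.net {u : ℝ → X} (hc : Continuous u) (hap : APprop u) :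
    ∀ ε > (0:ℝ), ∃ Fs : Finset ℝ, ∀ s : ℝ, ∃ σ ∈ Fs, ∀ t : ℝ, ‖u (t + s) - u (t + σ)‖ ≤ ε := by
  intro ε hε
  obtain ⟨δ, hδ, hUC⟩ := hap.unif_cont hc (ε/2) (by linarith)
  obtain ⟨l, hl, hT⟩ := hap (ε/2) (by linarith)
  refine ⟨(Finset.range (⌈l/δ⌉₊+1)).image (fun i : ℕ => (i:ℝ)*δ), fun s => ?_⟩
  obtain ⟨τ, hτT, hτI⟩ := hT (-s)
  obtain ⟨c, hcε, hcb⟩ := hτT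
  set ρ := s + τ with hρ
  have hρ0 : 0 ≤ ρ := by have := hτI.1; simp only [hρ]; linarith
  have hρl : ρ ≤ l := by have := hτI.2; simp only [hρ]; linarith
  set i := ⌊ρ/δ⌋₊ with hi
  have hmem : (i:ℝ)*δ ∈ (Finset.range (⌈l/δ⌉₊+1)).image (fun i : ℕ => (i:ℝ)*δ) := by
    refine Finset.mem_image.2 ⟨i, Finset.mem_range.2 (Nat.lt_succ_of_le ?_), rfl⟩
    exact le_trans (Nat.floor_le_floor (by gcongr)) (Nat.floor_le_ceil _)
  refine ⟨(i:ℝ)*δ, hmem, fun t => ?_⟩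
  have h1 : (i:ℝ)*δ ≤ ρ := by
    have h1' : (i:ℝ) ≤ ρ/δ := Nat.floor_le (by positivity)
    rw [← le_div_iff₀ hδ]; exact h1'
  have h2 : ρ < ((i:ℝ)+1)*δ := by
    have h2' : ρ/δ < (i:ℝ)+1 := Nat.lt_floor_add_one _
    rw [← div_lt_iff₀ hδ]; exact h2'
  have h3 : |(t + ρ) - (t + (i:ℝ)*δ)| ≤ δ := by
    rw [abs_le]; constructor <;> nlinarith
  calc ‖u (t+s) - u (t + (i:ℝ)*δ)‖
      ≤ ‖u ((t+s) + τ) - u (t+s)‖ + ‖u (t + ρ) - u (t + (i:ℝ)*δ)‖ := by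
        have he : t + ρ = (t + s) + τ := by rw [hρ]; ring
        rw [he]
        have : u (t+s) - u (t + (i:ℝ)*δ) =
            -(u ((t+s)+τ) - u (t+s)) + (u ((t+s)+τ) - u (t+(i:ℝ)*δ)) := by abel
        rw [this]
        refine le_trans (norm_add_le _ _) ?_
        rw [norm_neg]
    _ ≤ c + ε/2 := add_le_add (hcb _) (hUC _ _ h3)
    _ ≤ ε := by linarith

lemma exists_seq_avoid (T : Set ℝ) (hNot : ∀ l > (0:ℝ), ∃ a, ∀ τ ∈ T, τ ∉ Set.Icc a (a + l)) :
    ∀ k : ℕ, ∃ s : Fin k → ℝ, ∀ i j : Fin k, j < i → s i - s j ∉ T := by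
  intro k
  induction k with
  | zero => exact ⟨fun i => 0, fun i => i.elim0⟩
  | succ k ih =>
    obtain ⟨s, hs⟩ := ih
    set B : ℝ := ∑ i : Fin k, |s i| with hB
    have hB0 : 0 ≤ B := Finset.sum_nonneg fun i _ => abs_nonneg _
    have hBi : ∀ i : Fin k, |s i| ≤ B :=
      fun i => Finset.single_le_sum (fun i _ => abs_nonneg (s i)) (Finset.mem_univ i)
    obtain ⟨a, ha⟩ := hNot (2*B + 2) (by linarith)
    refine ⟨Fin.snoc s (a + B + 1), fun i j hij => ?_⟩
    rcases Fin.eq_castSucc_or_eq_last i with ⟨i', rfl⟩ | rfl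
    · have hj : j ≠ Fin.last k := ne_of_lt (lt_of_lt_of_le hij i'.castSucc_lt_last.le)
      obtain ⟨j', rfl⟩ := Fin.exists_castSucc_eq.2 hj
      rw [Fin.snoc_castSucc, Fin.snoc_castSucc]
      exact hs i' j' (by exact_mod_cast hij)
    · have hj : j ≠ Fin.last k := ne_of_lt hij
      obtain ⟨j', rfl⟩ := Fin.exists_castSucc_eq.2 hj
      rw [Fin.snoc_last, Fin.snoc_castSucc]
      intro hT
      have h1 : |s j'| ≤ B := hBi j'
      rw [abs_le] at h1
      exact ha _ hT ⟨by linarith, by linarith⟩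

lemma common_ap {u : ℝ → X} {v : ℝ → Y} (hcu : Continuous u) (hapu : APprop u)
    (hcv : Continuous v) (hapv : APprop v) :
    ∀ ε > (0:ℝ), RelDense {τ : ℝ | (∀ t : ℝ, ‖u (t + τ) - u t‖ ≤ ε) ∧
      (∀ t : ℝ, ‖v (t + τ) - v t‖ ≤ ε)} := by
  intro ε hε
  set T := {τ : ℝ | (∀ t : ℝ, ‖u (t + τ) - u t‖ ≤ ε) ∧ (∀ t : ℝ, ‖v (t + τ) - v t‖ ≤ ε)} with hT
  by_contra hNot
  rw [RelDense] at hNot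
  push_neg at hNot
  have hNot' : ∀ l > (0:ℝ), ∃ a, ∀ τ ∈ T, τ ∉ Set.Icc a (a + l) := by
    intro l hl
    obtain ⟨a, ha⟩ := hNot l hl
    exact ⟨a, ha⟩
  obtain ⟨Fu, hFu⟩ := hapu.net hcu (ε/2) (by linarith)
  obtain ⟨Fv, hFv⟩ := hapv.net hcv (ε/2) (by linarith)
  set n := (Fu ×ˢ Fv).card with hn
  obtain ⟨s, hs⟩ := exists_seq_avoid T hNot' (n+1)
  choose σu hσuF hσu using hFu
  choose σv hσvF hσv using hFv
  have hmaps : ∀ i ∈ (Finset.univ : Finset (Fin (n+1))),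
      (σu (s i), σv (s i)) ∈ Fu ×ˢ Fv := by
    intro i _
    exact Finset.mem_product.2 ⟨hσuF _, hσvF _⟩
  have hcard : (Fu ×ˢ Fv).card < (Finset.univ : Finset (Fin (n+1))).card := by
    simp [hn]
  obtain ⟨i, _, j, _, hij, heq⟩ :=
    Finset.exists_ne_map_eq_of_card_lt_of_maps_to hcard hmaps
  have key : ∀ (i j : Fin (n+1)), σu (s i) = σu (s j) → σv (s i) = σv (s j) →
      s i - s j ∈ T := by
    intro i j hu hv
    constructor
    · intro t
      have e1 := hσu (s i) (t - s j)
      have e2 := hσu (s j) (t - s j)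
      rw [hu] at e1
      have e3 : t - s j + s i = t + (s i - s j) := by ring
      have e4 : t - s j + s j = t := by ring
      rw [e3] at e1; rw [e4] at e2
      calc ‖u (t + (s i - s j)) - u t‖
          ≤ ‖u (t + (s i - s j)) - u (t - s j + σu (s j))‖ + ‖u (t - s j + σu (s j)) - u t‖ := by
            have : u (t + (s i - s j)) - u t =
              (u (t + (s i - s j)) - u (t - s j + σu (s j))) + (u (t - s j + σu (s j)) - u t) := by abel
            rw [this]; exact norm_add_le _ _
        _ ≤ ε/2 + ε/2 := by
            refine add_le_add e1 ?_
            rw [← norm_neg]; simpa using e2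
        _ = ε := by ring
    · intro t
      have e1 := hσv (s i) (t - s j)
      have e2 := hσv (s j) (t - s j)
      rw [hv] at e1
      have e3 : t - s j + s i = t + (s i - s j) := by ring
      have e4 : t - s j + s j = t := by ring
      rw [e3] at e1; rw [e4] at e2
      calc ‖v (t + (s i - s j)) - v t‖
          ≤ ‖v (t + (s i - s j)) - v (t - s j + σv (s j))‖ + ‖v (t - s j + σv (s j)) - v t‖ := by
            have : v (t + (s i - s j)) - v t =
              (v (t + (s i - s j)) - v (t - s j + σv (s j))) + (v (t - s j + σv (s j)) - v t) := by abel
            rw [this]; exact norm_add_le _ _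
        _ ≤ ε/2 + ε/2 := by
            refine add_le_add e1 ?_
            rw [← norm_neg]; simpa using e2
        _ = ε := by ring
  have hu' : σu (s i) = σu (s j) := congrArg Prod.fst heq
  have hv' : σv (s i) = σv (s j) := congrArg Prod.snd heq
  rcases lt_or_gt_of_ne hij with h | h
  · exact hs j i h (key j i hu'.symm hv'.symm)
  · exact hs i j h (key i j hu' hv')

lemma condH_finite {μ : Measure ℝ} (hμH : CondH μ) (S : Finset ℝ) :
    ∃ β : ℝ, 1 ≤ β ∧ ∃ M : ℝ, 0 ≤ M ∧ ∀ τ ∈ S, ∀ A : Set ℝ, MeasurableSet A →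
      A ∩ Set.Icc (-M) M = ∅ → μ ((fun t => t + τ) '' A) ≤ ENNReal.ofReal β * μ A := by
  induction S using Finset.induction_on with
  | empty => exact ⟨1, le_refl _, 0, le_refl _, fun τ hτ => absurd hτ (Finset.notMem_empty τ)⟩
  | insert τ₀ S hnew ih =>
    obtain ⟨β, hβ1, M, hM0, hSb⟩ := ih
    obtain ⟨β₀, hβ₀, a, b, h₀⟩ := hμH τ₀
    refine ⟨max β β₀, le_trans hβ1 (le_max_left _ _), max M (max |a| |b|),
      le_trans hM0 (le_max_left _ _), fun τ hτ A hA hAI => ?_⟩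
    have hsub : ∀ M' : ℝ, Set.Icc (-M') M' ⊆ Set.Icc (-(max M (max |a| |b|))) (max M (max |a| |b|)) →
        A ∩ Set.Icc (-M') M' = ∅ := by
      intro M' hM'
      rw [Set.eq_empty_iff_forall_notMem] at hAI ⊢
      intro z hz
      exact hAI z ⟨hz.1, hM' hz.2⟩
    rcases Finset.mem_insert.1 hτ with rfl | hτS
    · have hab : A ∩ Set.Icc a b = ∅ := by
        rw [Set.eq_empty_iff_forall_notMem] at hAI ⊢
        intro z hz
        refine hAI z ⟨hz.1, ?_, ?_⟩
        · have : -(max M (max |a| |b|)) ≤ -|a| := by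
            simp only [neg_le_neg_iff]
            exact le_trans (le_max_left _ _) (le_max_right _ _)
          exact le_trans this (le_trans (neg_abs_le a) hz.2.1)
        · exact le_trans hz.2.2 (le_trans (le_trans (le_abs_self b) (le_max_right _ _)) (le_max_right _ _))
      calc μ ((fun t => t + τ) '' A) ≤ ENNReal.ofReal β₀ * μ A := h₀ A hA hab
        _ ≤ ENNReal.ofReal (max β β₀) * μ A := by
            gcongr
            exact le_max_right _ _
    · have hM : A ∩ Set.Icc (-M) M = ∅ := by
        apply hsub
        intro z hz
        constructor
        · exact le_trans (neg_le_neg (le_max_left _ _)) hz.1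
        · exact le_trans hz.2 (le_max_left _ _)
      calc μ ((fun t => t + τ) '' A) ≤ ENNReal.ofReal β * μ A := hSb τ hτS A hA hM
        _ ≤ ENNReal.ofReal (max β β₀) * μ A := by
            gcongr
            exact le_max_left _ _

lemma keyLemma (μ : Measure ℝ) (hμ1 : μ Set.univ = ⊤)
    (hμ2 : ∀ a b : ℝ, μ (Set.Icc a b) < ⊤) (hμH : CondH μ)
    (φ : ℝ → ℝ) (hφ0 : ∀ s, 0 ≤ φ s)
    (hφint : ∀ a b : ℝ, IntegrableOn φ (Set.Icc a b) μ)
    (c : ℝ) (hc : 0 < c) (δ ℓ : ℝ) (hδ : 0 < δ) (hℓ : 0 < ℓ)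
    (hD : ∀ a : ℝ, ∃ d ∈ Set.Icc a (a + ℓ), ∀ s ∈ Set.Icc d (d + δ), c ≤ φ s)
    (herg : MuErgodic μ φ) : False := by
  choose d hd1 hd2 using hD
  set Lr : ℝ := ℓ + δ with hLr
  have hLr0 : 0 < Lr := by positivity
  set N : ℕ := ⌈Lr/δ⌉₊ with hN
  have hNδ : Lr ≤ (N:ℝ) * δ := by
    have := Nat.le_ceil (Lr/δ)
    rw [← div_le_iff₀ hδ]
    exact this
  -- finite CondH data
  set S : Finset ℝ := ((Finset.range (2*N+1)).image fun j : ℕ => (j:ℝ)*δ) ∪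
      ((Finset.range (2*N+1)).image fun j : ℕ => -(((j:ℝ)+1)*δ)) with hS
  obtain ⟨β, hβ1, M, hM0, hCH⟩ := condH_finite hμH S
  -- basic facts about d
  have hdmem : ∀ w : ℝ, w ≤ d w ∧ d w ≤ w + ℓ := fun w => ⟨(hd1 w).1, (hd1 w).2⟩
  -- pieces
  set pP : ℕ → Set ℝ := fun k => Set.Ico (d ((k:ℝ)*Lr - Lr)) (d ((k:ℝ)*Lr - Lr) + δ) with hpP
  set pN : ℕ → Set ℝ := fun k => Set.Ioc (d (-((k:ℝ)*Lr))) (d (-((k:ℝ)*Lr)) + δ) with hpN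
  have hPin : ∀ k : ℕ, ∀ z ∈ pP k, (k:ℝ)*Lr - Lr ≤ z ∧ z < (k:ℝ)*Lr := by
    intro k z hz
    obtain ⟨h1, h2⟩ := hdmem ((k:ℝ)*Lr - Lr)
    exact ⟨le_trans h1 hz.1, by have := hz.2; simp only [hLr] at *; linarith⟩
  have hNin : ∀ k : ℕ, ∀ z ∈ pN k, -((k:ℝ)*Lr) < z ∧ z ≤ -((k:ℝ)*Lr) + Lr := by
    intro k z hz
    obtain ⟨h1, h2⟩ := hdmem (-((k:ℝ)*Lr))
    exact ⟨lt_of_le_of_lt h1 hz.1, by have := hz.2; simp only [hLr] at *; linarith⟩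
  -- single window bounds
  have hWpos : ∀ w : ℝ, M + 1 ≤ w →
      μ (Set.Icc (w + Lr) (w + 2*Lr)) ≤
        (2*N+1 : ℕ) * (ENNReal.ofReal β * μ (Set.Ico (d w) (d w + δ))) := by
    intro w hw
    obtain ⟨hd1w, hd2w⟩ := hdmem w
    set p := d w with hp
    -- cover
    have hcover : Set.Icc (w + Lr) (w + 2*Lr) ⊆
        ⋃ j ∈ Finset.range (2*N+1), Set.Ico (p + (j:ℝ)*δ) (p + ((j:ℝ)+1)*δ) := by
      intro t ht
      have ht1 : δ ≤ t - p := by simp only [hLr] at *; linarith [ht.1]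
      have ht2 : t - p < ((2*N+1 : ℕ) : ℝ) * δ := by
        have : t - p ≤ 2*Lr := by linarith [ht.2]
        have h2 : ((2*N+1:ℕ):ℝ) * δ = 2*((N:ℝ)*δ) + δ := by push_cast; ring
        linarith
      set j := ⌊(t - p)/δ⌋₊ with hj
      have hj1 : (j:ℝ) ≤ (t-p)/δ := Nat.floor_le (div_nonneg (by linarith) hδ.le)
      have hj2 : (t-p)/δ < (j:ℝ) + 1 := Nat.lt_floor_add_one _
      have hjlt : j < 2*N+1 := by
        have : (j:ℝ) < ((2*N+1:ℕ):ℝ) := by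
          have h3 : (t-p)/δ < ((2*N+1:ℕ):ℝ) := by rw [div_lt_iff₀ hδ]; linarith
          linarith
        exact_mod_cast this
      refine Set.mem_biUnion (Finset.mem_range.2 hjlt) ?_
      constructor
      · have : (j:ℝ)*δ ≤ t - p := by rw [← le_div_iff₀ hδ]; exact hj1
        linarith
      · have : t - p < ((j:ℝ)+1)*δ := by rw [← div_lt_iff₀ hδ]; exact hj2
        linarith
    have hAI : Set.Ico p (p + δ) ∩ Set.Icc (-M) M = ∅ := by
      rw [Set.eq_empty_iff_forall_notMem]
      rintro z ⟨hz1, hz2⟩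
      have : M + 1 ≤ z := le_trans hw (le_trans hd1w hz1.1)
      linarith [hz2.2]
    calc μ (Set.Icc (w + Lr) (w + 2*Lr))
        ≤ μ (⋃ j ∈ Finset.range (2*N+1), Set.Ico (p + (j:ℝ)*δ) (p + ((j:ℝ)+1)*δ)) :=
          measure_mono hcover
      _ ≤ ∑ j ∈ Finset.range (2*N+1), μ (Set.Ico (p + (j:ℝ)*δ) (p + ((j:ℝ)+1)*δ)) :=
          measure_biUnion_finset_le _ _
      _ ≤ ∑ j ∈ Finset.range (2*N+1), ENNReal.ofReal β * μ (Set.Ico p (p + δ)) := by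
          refine Finset.sum_le_sum fun j hj => ?_
          have himg : Set.Ico (p + (j:ℝ)*δ) (p + ((j:ℝ)+1)*δ) =
              (fun t => t + (j:ℝ)*δ) '' Set.Ico p (p + δ) := by
            rw [Set.image_add_const_Ico]
            congr 1
            ring
          rw [himg]
          refine hCH ((j:ℝ)*δ) ?_ _ measurableSet_Ico hAI
          exact Finset.mem_union_left _ (Finset.mem_image.2 ⟨j, hj, rfl⟩)
      _ = (2*N+1 : ℕ) * (ENNReal.ofReal β * μ (Set.Ico p (p + δ))) := by
          rw [Finset.sum_const, Finset.card_range, nsmul_eq_mul]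
  have hWneg : ∀ w : ℝ, w ≤ -(M + 1) - Lr →
      μ (Set.Icc (w - Lr) w) ≤
        (2*N+1 : ℕ) * (ENNReal.ofReal β * μ (Set.Ioc (d w) (d w + δ))) := by
    intro w hw
    obtain ⟨hd1w, hd2w⟩ := hdmem w
    set q := d w with hq
    have hcover : Set.Icc (w - Lr) w ⊆
        ⋃ j ∈ Finset.range (2*N+1), Set.Ioc (q - ((j:ℝ)+1)*δ) (q - (j:ℝ)*δ) := by
      intro t ht
      have ht1 : 0 ≤ q - t := by linarith [ht.2, hd1w]
      have ht2 : q - t < ((2*N+1 : ℕ) : ℝ) * δ := by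
        have : q - t ≤ 2*Lr := by simp only [hLr] at *; linarith [ht.1]
        have h2 : ((2*N+1:ℕ):ℝ) * δ = 2*((N:ℝ)*δ) + δ := by push_cast; ring
        linarith
      set j := ⌊(q - t)/δ⌋₊ with hj
      have hj1 : (j:ℝ) ≤ (q-t)/δ := Nat.floor_le (div_nonneg ht1 hδ.le)
      have hj2 : (q-t)/δ < (j:ℝ) + 1 := Nat.lt_floor_add_one _
      have hjlt : j < 2*N+1 := by
        have : (j:ℝ) < ((2*N+1:ℕ):ℝ) := by
          have h3 : (q-t)/δ < ((2*N+1:ℕ):ℝ) := by rw [div_lt_iff₀ hδ]; linarith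
          linarith
        exact_mod_cast this
      refine Set.mem_biUnion (Finset.mem_range.2 hjlt) ?_
      constructor
      · have : q - t < ((j:ℝ)+1)*δ := by rw [← div_lt_iff₀ hδ]; exact hj2
        linarith
      · have : (j:ℝ)*δ ≤ q - t := by rw [← le_div_iff₀ hδ]; exact hj1
        linarith
    have hAI : Set.Ioc q (q + δ) ∩ Set.Icc (-M) M = ∅ := by
      rw [Set.eq_empty_iff_forall_notMem]
      rintro z ⟨hz1, hz2⟩
      have : z ≤ -(M+1) := by
        have := hz1.2
        simp only [hLr] at *
        linarith
      linarith [hz2.1]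
    calc μ (Set.Icc (w - Lr) w)
        ≤ μ (⋃ j ∈ Finset.range (2*N+1), Set.Ioc (q - ((j:ℝ)+1)*δ) (q - (j:ℝ)*δ)) :=
          measure_mono hcover
      _ ≤ ∑ j ∈ Finset.range (2*N+1), μ (Set.Ioc (q - ((j:ℝ)+1)*δ) (q - (j:ℝ)*δ)) :=
          measure_biUnion_finset_le _ _
      _ ≤ ∑ j ∈ Finset.range (2*N+1), ENNReal.ofReal β * μ (Set.Ioc q (q + δ)) := by
          refine Finset.sum_le_sum fun j hj => ?_
          have himg : Set.Ioc (q - ((j:ℝ)+1)*δ) (q - (j:ℝ)*δ) =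
              (fun t => t + (-(((j:ℝ)+1)*δ))) '' Set.Ioc q (q + δ) := by
            rw [Set.image_add_const_Ioc]
            congr 1 <;> ring
          rw [himg]
          refine hCH (-(((j:ℝ)+1)*δ)) ?_ _ measurableSet_Ioc hAI
          exact Finset.mem_union_right _ (Finset.mem_image.2 ⟨j, hj, rfl⟩)
      _ = (2*N+1 : ℕ) * (ENNReal.ofReal β * μ (Set.Ioc q (q + δ))) := by
          rw [Finset.sum_const, Finset.card_range, nsmul_eq_mul]
  -- threshold index
  set K₀ : ℕ := ⌈(M+1)/Lr⌉₊ + 1 with hK₀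
  have hK₀Lr : M + 1 ≤ ((K₀:ℝ) - 1) * Lr := by
    have h1 : (M+1)/Lr ≤ (⌈(M+1)/Lr⌉₊ : ℝ) := Nat.le_ceil _
    have h2 : ((K₀:ℝ) - 1) = (⌈(M+1)/Lr⌉₊ : ℝ) := by push_cast [hK₀]; ring
    rw [h2, ← div_le_iff₀ hLr0] at *
    exact h1
  have hK₀1 : 1 ≤ K₀ := Nat.le_add_left 1 _
  -- window bounds for good indices
  have hGoodP : ∀ k : ℕ, K₀ ≤ k →
      μ (Set.Icc ((k:ℝ)*Lr) ((k:ℝ)*Lr + Lr)) ≤ (2*N+1 : ℕ) * (ENNReal.ofReal β * μ (pP k)) := by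
    intro k hk
    have hkr : (K₀:ℝ) ≤ (k:ℝ) := by exact_mod_cast hk
    have hw : M + 1 ≤ (k:ℝ)*Lr - Lr := by nlinarith
    have h := hWpos ((k:ℝ)*Lr - Lr) hw
    have e1 : (k:ℝ)*Lr - Lr + Lr = (k:ℝ)*Lr := by ring
    have e2 : (k:ℝ)*Lr - Lr + 2*Lr = (k:ℝ)*Lr + Lr := by ring
    rw [e1, e2] at h
    exact h
  have hGoodN : ∀ k : ℕ, K₀ ≤ k →
      μ (Set.Icc (-((k:ℝ)*Lr) - Lr) (-((k:ℝ)*Lr))) ≤ (2*N+1 : ℕ) * (ENNReal.ofReal β * μ (pN k)) := by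
    intro k hk
    have hkr : (K₀:ℝ) ≤ (k:ℝ) := by exact_mod_cast hk
    have hw : -((k:ℝ)*Lr) ≤ -(M+1) - Lr := by nlinarith
    exact hWneg _ hw
  -- covering of the symmetric interval by windows
  have hhelper : ∀ m : ℕ, 1 ≤ m → ∀ u : ℝ, 0 ≤ u → u ≤ (m:ℝ)*Lr →
      ∃ k : ℕ, k < m ∧ (k:ℝ)*Lr ≤ u ∧ u ≤ (k:ℝ)*Lr + Lr := by
    intro m hm u hu0 hum
    rcases lt_or_eq_of_le hum with hlt | heq
    · set k := ⌊u/Lr⌋₊ with hk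
      have hk1 : (k:ℝ) ≤ u/Lr := Nat.floor_le (by positivity)
      have hk2 : u/Lr < (k:ℝ) + 1 := Nat.lt_floor_add_one _
      have hklt : k < m := by
        have : (k:ℝ) < (m:ℝ) := lt_of_le_of_lt hk1 (by rw [div_lt_iff₀ hLr0]; linarith)
        exact_mod_cast this
      refine ⟨k, hklt, ?_, ?_⟩
      · rw [← le_div_iff₀ hLr0]; exact hk1
      · have : u < ((k:ℝ)+1)*Lr := by rw [← div_lt_iff₀ hLr0]; exact hk2
        linarith
    · refine ⟨m - 1, Nat.sub_lt hm one_pos, ?_, ?_⟩ <;>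
      · have hcast : ((m-1:ℕ):ℝ) = (m:ℝ) - 1 := by
          push_cast [Nat.cast_sub hm]; ring
        rw [hcast, heq]; nlinarith [hLr0]
  -- per m analysis
  set W : ℕ → Set ℝ := fun k => Set.Icc ((k:ℝ)*Lr) ((k:ℝ)*Lr + Lr) with hW
  set W' : ℕ → Set ℝ := fun k => Set.Icc (-((k:ℝ)*Lr) - Lr) (-((k:ℝ)*Lr)) with hW'
  have hcovm : ∀ m : ℕ, 1 ≤ m → Set.Icc (-((m:ℝ)*Lr)) ((m:ℝ)*Lr) ⊆
      (⋃ k ∈ Finset.range m, W k) ∪ (⋃ k ∈ Finset.range m, W' k) := by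
    intro m hm t ht
    rcases le_or_gt 0 t with h0 | h0
    · obtain ⟨k, hk, h1, h2⟩ := hhelper m hm t h0 ht.2
      exact Or.inl (Set.mem_biUnion (Finset.mem_range.2 hk) ⟨h1, h2⟩)
    · obtain ⟨k, hk, h1, h2⟩ := hhelper m hm (-t) (by linarith) (by linarith [ht.1])
      exact Or.inr (Set.mem_biUnion (Finset.mem_range.2 hk) ⟨by linarith, by linarith⟩)
  -- constants
  set C₀ : ℝ≥0∞ := μ (Set.Icc (-((K₀:ℝ)*Lr)) ((K₀:ℝ)*Lr)) with hC₀
  have hC₀fin : C₀ ≠ ⊤ := (hμ2 _ _).ne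
  have hbadP : ∀ k : ℕ, k < K₀ → μ (W k) ≤ C₀ := by
    intro k hk
    have hkr : (k:ℝ) + 1 ≤ (K₀:ℝ) := by exact_mod_cast hk
    have hmul : ((k:ℝ)+1)*Lr ≤ (K₀:ℝ)*Lr := mul_le_mul_of_nonneg_right hkr hLr0.le
    have hk0 : (0:ℝ) ≤ (k:ℝ)*Lr := by positivity
    have hK0 : (0:ℝ) ≤ (K₀:ℝ)*Lr := by positivity
    refine measure_mono fun z hz => ?_
    obtain ⟨h1, h2⟩ := hz
    constructor
    · linarith
    · nlinarith
  have hbadN : ∀ k : ℕ, k < K₀ → μ (W' k) ≤ C₀ := by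
    intro k hk
    have hkr : (k:ℝ) + 1 ≤ (K₀:ℝ) := by exact_mod_cast hk
    have hmul : ((k:ℝ)+1)*Lr ≤ (K₀:ℝ)*Lr := mul_le_mul_of_nonneg_right hkr hLr0.le
    have hk0 : (0:ℝ) ≤ (k:ℝ)*Lr := by positivity
    have hK0 : (0:ℝ) ≤ (K₀:ℝ)*Lr := by positivity
    refine measure_mono fun z hz => ?_
    obtain ⟨h1, h2⟩ := hz
    constructor
    · nlinarith
    · linarith
  -- main measure inequality
  set SP : ℕ → ℝ≥0∞ := fun m => ∑ k ∈ Finset.Ico K₀ m, μ (pP k) with hSP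
  set SN : ℕ → ℝ≥0∞ := fun m => ∑ k ∈ Finset.Ico K₀ m, μ (pN k) with hSN
  have hmain : ∀ m : ℕ, K₀ ≤ m →
      μ (Set.Icc (-((m:ℝ)*Lr)) ((m:ℝ)*Lr)) ≤
        (K₀ : ℝ≥0∞) * C₀ * 2 + (2*N+1 : ℕ) * ENNReal.ofReal β * (SP m + SN m) := by
    intro m hm
    have hm1 : 1 ≤ m := le_trans hK₀1 hm
    calc μ (Set.Icc (-((m:ℝ)*Lr)) ((m:ℝ)*Lr))
        ≤ μ ((⋃ k ∈ Finset.range m, W k) ∪ (⋃ k ∈ Finset.range m, W' k)) :=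
          measure_mono (hcovm m hm1)
      _ ≤ μ (⋃ k ∈ Finset.range m, W k) + μ (⋃ k ∈ Finset.range m, W' k) :=
          measure_union_le _ _
      _ ≤ (∑ k ∈ Finset.range m, μ (W k)) + ∑ k ∈ Finset.range m, μ (W' k) :=
          add_le_add (measure_biUnion_finset_le _ _) (measure_biUnion_finset_le _ _)
      _ ≤ (K₀ : ℝ≥0∞) * C₀ * 2 + (2*N+1 : ℕ) * ENNReal.ofReal β * (SP m + SN m) := by
          have hsplitP : ∑ k ∈ Finset.range m, μ (W k) =
              (∑ k ∈ Finset.Ico 0 K₀, μ (W k)) + ∑ k ∈ Finset.Ico K₀ m, μ (W k) := by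
            rw [Finset.sum_Ico_consecutive _ (Nat.zero_le _) hm, Finset.range_eq_Ico]
          have hsplitN : ∑ k ∈ Finset.range m, μ (W' k) =
              (∑ k ∈ Finset.Ico 0 K₀, μ (W' k)) + ∑ k ∈ Finset.Ico K₀ m, μ (W' k) := by
            rw [Finset.sum_Ico_consecutive _ (Nat.zero_le _) hm, Finset.range_eq_Ico]
          rw [hsplitP, hsplitN]
          have hb1 : ∑ k ∈ Finset.Ico 0 K₀, μ (W k) ≤ (K₀ : ℝ≥0∞) * C₀ := by
            calc ∑ k ∈ Finset.Ico 0 K₀, μ (W k) ≤ ∑ _k ∈ Finset.Ico 0 K₀, C₀ :=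
                  Finset.sum_le_sum fun k hk => hbadP k (by simpa using (Finset.mem_Ico.1 hk).2)
              _ = (K₀ : ℝ≥0∞) * C₀ := by
                  rw [Finset.sum_const, nsmul_eq_mul]
                  simp
          have hb2 : ∑ k ∈ Finset.Ico 0 K₀, μ (W' k) ≤ (K₀ : ℝ≥0∞) * C₀ := by
            calc ∑ k ∈ Finset.Ico 0 K₀, μ (W' k) ≤ ∑ _k ∈ Finset.Ico 0 K₀, C₀ :=
                  Finset.sum_le_sum fun k hk => hbadN k (by simpa using (Finset.mem_Ico.1 hk).2)
              _ = (K₀ : ℝ≥0∞) * C₀ := by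
                  rw [Finset.sum_const, nsmul_eq_mul]
                  simp
          have hg1 : ∑ k ∈ Finset.Ico K₀ m, μ (W k) ≤ (2*N+1 : ℕ) * ENNReal.ofReal β * SP m := by
            rw [hSP, Finset.mul_sum]
            refine Finset.sum_le_sum fun k hk => ?_
            rw [mul_assoc]
            exact hGoodP k (Finset.mem_Ico.1 hk).1
          have hg2 : ∑ k ∈ Finset.Ico K₀ m, μ (W' k) ≤ (2*N+1 : ℕ) * ENNReal.ofReal β * SN m := by
            rw [hSN, Finset.mul_sum]
            refine Finset.sum_le_sum fun k hk => ?_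
            rw [mul_assoc]
            exact hGoodN k (Finset.mem_Ico.1 hk).1
          calc (∑ k ∈ Finset.Ico 0 K₀, μ (W k) + ∑ k ∈ Finset.Ico K₀ m, μ (W k)) +
                (∑ k ∈ Finset.Ico 0 K₀, μ (W' k) + ∑ k ∈ Finset.Ico K₀ m, μ (W' k))
              ≤ ((K₀ : ℝ≥0∞) * C₀ + (2*N+1 : ℕ) * ENNReal.ofReal β * SP m) +
                ((K₀ : ℝ≥0∞) * C₀ + (2*N+1 : ℕ) * ENNReal.ofReal β * SN m) :=
                add_le_add (add_le_add hb1 hg1) (add_le_add hb2 hg2)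
            _ = (K₀ : ℝ≥0∞) * C₀ * 2 + (2*N+1 : ℕ) * ENNReal.ofReal β * (SP m + SN m) := by
                ring
  -- piece measurability / finiteness / location facts
  have hβ0 : (0:ℝ) < β := lt_of_lt_of_le one_pos hβ1
  have hpPfin : ∀ k : ℕ, μ (pP k) ≠ ⊤ :=
    fun k => ((measure_mono Set.Ico_subset_Icc_self).trans_lt (hμ2 _ _)).ne
  have hpNfin : ∀ k : ℕ, μ (pN k) ≠ ⊤ :=
    fun k => ((measure_mono Set.Ioc_subset_Icc_self).trans_lt (hμ2 _ _)).ne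
  have hmulK : ∀ x : ℝ, (K₀:ℝ) ≤ x → ((K₀:ℝ)-1)*Lr ≤ (x-1)*Lr :=
    fun x hx => mul_le_mul_of_nonneg_right (by linarith) hLr0.le
  have hpPlow : ∀ k : ℕ, K₀ ≤ k → ∀ z ∈ pP k, M + 1 ≤ z := by
    intro k hk z hz
    have hkr : (K₀:ℝ) ≤ (k:ℝ) := by exact_mod_cast hk
    have h1 := (hPin k z hz).1
    have h2 := hmulK (k:ℝ) hkr
    linarith
  have hpNhigh : ∀ k : ℕ, K₀ ≤ k → ∀ z ∈ pN k, z ≤ -(M + 1) := by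
    intro k hk z hz
    have hkr : (K₀:ℝ) ≤ (k:ℝ) := by exact_mod_cast hk
    have h1 := (hNin k z hz).2
    have h2 := hmulK (k:ℝ) hkr
    linarith
  have hdisjPN : ∀ k : ℕ, K₀ ≤ k → Disjoint (pP k) (pN k) := by
    intro k hk
    rw [Set.disjoint_left]
    intro z hz hz'
    have := hpPlow k hk z hz
    have := hpNhigh k hk z hz'
    linarith
  -- the integral lower bound
  have hIm : ∀ m : ℕ, K₀ ≤ m →
      c * ((SP m + SN m).toReal) ≤ ∫ t in Set.Icc (-((m:ℝ)*Lr)) ((m:ℝ)*Lr), φ t ∂μ := by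
    intro m hm
    set U : Set ℝ := ⋃ k ∈ Finset.Ico K₀ m, (pP k ∪ pN k) with hU
    have hUsub : U ⊆ Set.Icc (-((m:ℝ)*Lr)) ((m:ℝ)*Lr) := by
      intro z hz
      rcases Set.mem_iUnion₂.1 hz with ⟨k, hk, hzk⟩
      obtain ⟨hk1, hk2⟩ := Finset.mem_Ico.1 hk
      have hkK : (K₀:ℝ) ≤ (k:ℝ) := by exact_mod_cast hk1
      have hkm : (k:ℝ) ≤ (m:ℝ) := by exact_mod_cast hk2.le
      have hmulkm : (k:ℝ)*Lr ≤ (m:ℝ)*Lr := mul_le_mul_of_nonneg_right hkm hLr0.le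
      have hK1 : (1:ℝ) ≤ (K₀:ℝ) := by exact_mod_cast hK₀1
      rcases hzk with hz' | hz'
      · have h1 := (hPin k z hz').1
        have h2 := (hPin k z hz').2
        have h3 := hmulK (k:ℝ) hkK
        constructor
        · nlinarith
        · linarith
      · have h1 := (hNin k z hz').1
        have h2 := (hNin k z hz').2
        have h3 := hmulK (k:ℝ) hkK
        constructor
        · linarith
        · nlinarith
    have hint : IntegrableOn φ (Set.Icc (-((m:ℝ)*Lr)) ((m:ℝ)*Lr)) μ := hφint _ _
    have hintk : ∀ k ∈ Finset.Ico K₀ m, IntegrableOn φ (pP k ∪ pN k) μ := by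
      intro k hk
      refine (hint.mono_set ?_)
      intro z hz
      exact hUsub (Set.mem_biUnion hk hz)
    have hmes : ∀ k ∈ Finset.Ico K₀ m, MeasurableSet (pP k ∪ pN k) :=
      fun k _ => measurableSet_Ico.union measurableSet_Ioc
    have hpdis : (↑(Finset.Ico K₀ m) : Set ℕ).Pairwise (Function.onFun Disjoint fun k => pP k ∪ pN k) := by
      intro i hi j hj hij
      simp only [Finset.coe_Ico, Set.mem_Ico] at hi hj
      have key : ∀ a b : ℕ, K₀ ≤ a → K₀ ≤ b → a < b → Disjoint (pP a ∪ pN a) (pP b ∪ pN b) := by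
        intro a b ha hb hab
        have har : (K₀:ℝ) ≤ (a:ℝ) := by exact_mod_cast ha
        have hbr' : (K₀:ℝ) ≤ (b:ℝ) := by exact_mod_cast hb
        have habr : (a:ℝ) + 1 ≤ (b:ℝ) := by exact_mod_cast hab
        have hmul1 : ((a:ℝ)+1)*Lr ≤ (b:ℝ)*Lr := mul_le_mul_of_nonneg_right habr hLr0.le
        have hma := hmulK (a:ℝ) har
        have hmb := hmulK (b:ℝ) hbr'
        rw [Set.disjoint_left]
        rintro z (hz | hz) (hz' | hz')
        · have h1 := (hPin a z hz).2
          have h2 := (hPin b z hz').1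
          linarith
        · have h1 := (hPin a z hz).1
          have h2 := (hNin b z hz').2
          linarith
        · have h1 := (hNin a z hz).2
          have h2 := (hPin b z hz').1
          linarith
        · have h1 := (hNin a z hz).1
          have h2 := (hNin b z hz').2
          linarith
      rcases lt_or_gt_of_ne hij with h | h
      · exact key i j hi.1 hj.1 h
      · exact (key j i hj.1 hi.1 h).symm
    have step2 : ∫ t in U, φ t ∂μ = ∑ k ∈ Finset.Ico K₀ m, ∫ t in (pP k ∪ pN k), φ t ∂μ :=
      integral_biUnion_finset _ hmes hpdis hintk
    have step3 : ∀ k ∈ Finset.Ico K₀ m,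
        c * (μ (pP k)).toReal + c * (μ (pN k)).toReal ≤ ∫ t in (pP k ∪ pN k), φ t ∂μ := by
      intro k hk
      obtain ⟨hk1, _⟩ := Finset.mem_Ico.1 hk
      have hiP : IntegrableOn φ (pP k) μ := (hintk k hk).mono_set Set.subset_union_left
      have hiN : IntegrableOn φ (pN k) μ := (hintk k hk).mono_set Set.subset_union_right
      rw [setIntegral_union (hdisjPN k hk1) measurableSet_Ioc hiP hiN]
      have hb1 : c * (μ (pP k)).toReal ≤ ∫ t in pP k, φ t ∂μ := by
        refine setIntegral_ge_of_const_le_real measurableSet_Ico (hpPfin k) ?_ hiP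
        intro z hz
        exact hd2 _ z ⟨hz.1, hz.2.le⟩
      have hb2 : c * (μ (pN k)).toReal ≤ ∫ t in pN k, φ t ∂μ := by
        refine setIntegral_ge_of_const_le_real measurableSet_Ioc (hpNfin k) ?_ hiN
        intro z hz
        exact hd2 _ z ⟨hz.1.le, hz.2⟩
      exact add_le_add hb1 hb2
    have step1 : ∫ t in U, φ t ∂μ ≤ ∫ t in Set.Icc (-((m:ℝ)*Lr)) ((m:ℝ)*Lr), φ t ∂μ := by
      refine setIntegral_mono_set hint (Filter.Eventually.of_forall fun z => hφ0 z)
        (HasSubset.Subset.eventuallyLE hUsub)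
    have htosum : c * ((SP m + SN m).toReal) =
        ∑ k ∈ Finset.Ico K₀ m, (c * (μ (pP k)).toReal + c * (μ (pN k)).toReal) := by
      rw [hSP, hSN, ← Finset.sum_add_distrib, ENNReal.toReal_sum, Finset.mul_sum]
      · congr 1
        ext k
        rw [ENNReal.toReal_add (hpPfin k) (hpNfin k)]
        ring
      · intro k _
        exact ENNReal.add_ne_top.2 ⟨hpPfin k, hpNfin k⟩
    calc c * ((SP m + SN m).toReal)
        = ∑ k ∈ Finset.Ico K₀ m, (c * (μ (pP k)).toReal + c * (μ (pN k)).toReal) := htosum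
      _ ≤ ∑ k ∈ Finset.Ico K₀ m, ∫ t in (pP k ∪ pN k), φ t ∂μ := Finset.sum_le_sum step3
      _ = ∫ t in U, φ t ∂μ := step2.symm
      _ ≤ _ := step1
  -- limit facts
  have hμtop : Tendsto (fun m : ℕ => μ (Set.Icc (-((m:ℝ)*Lr)) ((m:ℝ)*Lr))) atTop (𝓝 ⊤) := by
    have hmono : Monotone (fun m : ℕ => Set.Icc (-((m:ℝ)*Lr)) ((m:ℝ)*Lr)) := by
      intro a b hab
      have habr : (a:ℝ) ≤ (b:ℝ) := by exact_mod_cast hab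
      have := mul_le_mul_of_nonneg_right habr hLr0.le
      exact Set.Icc_subset_Icc (by linarith) this
    have hunion : ⋃ m : ℕ, Set.Icc (-((m:ℝ)*Lr)) ((m:ℝ)*Lr) = Set.univ := by
      ext x
      simp only [Set.mem_univ, iff_true, Set.mem_iUnion]
      obtain ⟨m, hm⟩ := exists_nat_ge (|x|/Lr)
      have hx : |x| ≤ (m:ℝ)*Lr := by
        rw [div_le_iff₀ hLr0] at hm
        linarith
      rw [abs_le] at hx
      exact ⟨m, hx.1, hx.2⟩
    have h := tendsto_measure_iUnion_atTop (μ := μ) hmono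
    rwa [hunion, hμ1] at h
  set B : ℝ := ((2*N+1 : ℕ) : ℝ) * β with hB
  have hB0 : 0 < B := by positivity
  set Creal : ℝ := (((K₀ : ℝ≥0∞) * C₀ * 2).toReal) with hCreal
  have hCreal0 : 0 ≤ Creal := ENNReal.toReal_nonneg
  have hev1 : ∀ᶠ m : ℕ in atTop,
      ENNReal.ofReal (2*Creal + 1) < μ (Set.Icc (-((m:ℝ)*Lr)) ((m:ℝ)*Lr)) :=
    hμtop.eventually_const_lt (by simp [ENNReal.ofReal_lt_top])
  have hcomp : Tendsto (fun m : ℕ => (m:ℝ)*Lr) atTop atTop :=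
    Filter.Tendsto.atTop_mul_const hLr0 tendsto_natCast_atTop_atTop
  have hev2 : ∀ᶠ m : ℕ in atTop,
      (1 / (μ (Set.Icc (-((m:ℝ)*Lr)) ((m:ℝ)*Lr))).toReal) *
        ∫ t in Set.Icc (-((m:ℝ)*Lr)) ((m:ℝ)*Lr), φ t ∂μ < c / (2*B) := by
    have h := herg.eventually_lt_const (show (0:ℝ) < c/(2*B) by positivity)
    exact hcomp.eventually h
  obtain ⟨m, hm12, hm3⟩ := ((hev1.and hev2).and (eventually_ge_atTop K₀)).exists
  obtain ⟨hm1, hm2⟩ := hm12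
  -- final arithmetic
  set Vμ := μ (Set.Icc (-((m:ℝ)*Lr)) ((m:ℝ)*Lr)) with hVμ
  have hVfin : Vμ ≠ ⊤ := (hμ2 _ _).ne
  set V : ℝ := Vμ.toReal with hV
  set sR : ℝ := (SP m + SN m).toReal with hsR
  have hs0 : 0 ≤ sR := ENNReal.toReal_nonneg
  have hV1 : 2*Creal + 1 ≤ V := by
    have h := ENNReal.toReal_mono hVfin hm1.le
    rwa [ENNReal.toReal_ofReal (by linarith)] at h
  have hV0 : 0 < V := by linarith
  have hSfin : SP m + SN m ≠ ⊤ := by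
    refine ENNReal.add_ne_top.2 ⟨?_, ?_⟩ <;>
      exact (ENNReal.sum_lt_top.2 fun k _ => lt_of_le_of_ne le_top (by
        first
        | exact hpPfin k
        | exact hpNfin k)).ne
  have hfin1 : (K₀ : ℝ≥0∞) * C₀ * 2 ≠ ⊤ :=
    ENNReal.mul_ne_top (ENNReal.mul_ne_top (ENNReal.natCast_ne_top _) hC₀fin) (by simp)
  have hfin2 : ((2*N+1 : ℕ) : ℝ≥0∞) * ENNReal.ofReal β * (SP m + SN m) ≠ ⊤ :=
    ENNReal.mul_ne_top (ENNReal.mul_ne_top (ENNReal.natCast_ne_top _) ENNReal.ofReal_ne_top) hSfin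
  have hmainR : V ≤ Creal + B * sR := by
    have h := ENNReal.toReal_mono (ENNReal.add_ne_top.2 ⟨hfin1, hfin2⟩) (hmain m hm3)
    rw [ENNReal.toReal_add hfin1 hfin2] at h
    have e2 : (((2*N+1 : ℕ) : ℝ≥0∞) * ENNReal.ofReal β * (SP m + SN m)).toReal = B * sR := by
      rw [ENNReal.toReal_mul, ENNReal.toReal_mul, ENNReal.toReal_ofReal hβ0.le,
        ENNReal.toReal_natCast]
    rw [e2] at h
    exact h
  have hI := hIm m hm3
  set I : ℝ := ∫ t in Set.Icc (-((m:ℝ)*Lr)) ((m:ℝ)*Lr), φ t ∂μ with hIdef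
  have hV2Bs : V ≤ 2*(B*sR) := by linarith
  have hcV : c * V ≤ 2*B*I := by
    nlinarith [mul_le_mul_of_nonneg_left hV2Bs hc.le,
      mul_le_mul_of_nonneg_left hI (show (0:ℝ) ≤ 2*B by positivity)]
  have hfinal : c/(2*B) ≤ (1/V) * I := by
    rw [div_le_iff₀ (by positivity : (0:ℝ) < 2*B), one_div, inv_mul_eq_div,
      div_mul_eq_mul_div, le_div_iff₀ hV0]
    linarith
  linarith [hm2, hfinal]

end Aux

/-- if, for every `x`, `F₁(·,x)` is Bohr almost periodic, `F(·,x)` is bounded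
and continuous, and `t ↦ ‖F(t,x) - F₁(t,x)‖` is `μ`-ergodic (with `μ` satisfying (H)), and
`F` is `L`-Lipschitz in the second variable, then `F₁` is also `L`-Lipschitz in the second
variable. -/
theorem stmt14 {X : Type*} [NormedAddCommGroup X] [NormedSpace ℝ X] [CompleteSpace X]
    (μ : Measure ℝ) (hμ1 : μ Set.univ = ⊤)
    (hμ2 : ∀ a b : ℝ, μ (Set.Icc a b) < ⊤) (hμH : CondH μ)
    (L : ℝ) (hL : 0 ≤ L) (F F₁ : ℝ → X → X)
    (hF₁c : ∀ x, Continuous fun t => F₁ t x)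
    (hF₁ap : ∀ (x : X), ∀ ε > (0:ℝ), RelDense {τ : ℝ | ∃ c, c < ε ∧ ∀ t : ℝ,
      ‖F₁ (t + τ) x - F₁ t x‖ ≤ c})
    (hFc : ∀ x, Continuous fun t => F t x)
    (hFb : ∀ x : X, ∃ C : ℝ, ∀ t : ℝ, ‖F t x‖ ≤ C)
    (herg : ∀ x : X, MuErgodic μ (fun t => ‖F t x - F₁ t x‖))
    (hlip : ∀ (t : ℝ) (x y : X), ‖F t x - F t y‖ ≤ L * ‖x - y‖) :
    ∀ (t : ℝ) (x y : X), ‖F₁ t x - F₁ t y‖ ≤ L * ‖x - y‖ := by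
  -- the measure is finite on compacts
  haveI : IsFiniteMeasureOnCompacts μ := by
    refine ⟨fun {K} hK => ?_⟩
    obtain ⟨r, hr⟩ := hK.isBounded.subset_closedBall 0
    refine lt_of_le_of_lt (measure_mono ?_) (hμ2 (0 - r) (0 + r))
    rw [← Real.closedBall_eq_Icc]
    exact hr
  intro t₀ x y
  by_contra hcon
  push_neg at hcon
  set u : ℝ → X := fun t => F₁ t x with hu
  set v : ℝ → X := fun t => F₁ t y with hv
  set K : ℝ := ‖u t₀ - v t₀‖ - L * ‖x - y‖ with hK
  have hK0 : 0 < K := by simp only [hK, hu, hv]; linarith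
  set ε : ℝ := K / 8 with hε
  have hε0 : 0 < ε := by positivity
  have hapu : APprop u := hF₁ap x
  have hapv : APprop v := hF₁ap y
  obtain ⟨δu, hδu0, hUCu⟩ := hapu.unif_cont (hF₁c x) ε hε0
  obtain ⟨δv, hδv0, hUCv⟩ := hapv.unif_cont (hF₁c y) ε hε0
  set δ : ℝ := min δu δv with hδ
  have hδ0 : 0 < δ := lt_min hδu0 hδv0
  obtain ⟨l, hl0, hTl⟩ := common_ap (hF₁c x) hapu (hF₁c y) hapv ε hε0
  -- the ergodic function
  set φ : ℝ → ℝ := fun s => ‖F s x - F₁ s x‖ + ‖F s y - F₁ s y‖ with hφ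
  have hφc : Continuous φ := (((hFc x).sub (hF₁c x)).norm).add (((hFc y).sub (hF₁c y)).norm)
  have hφ0 : ∀ s, 0 ≤ φ s := fun s => add_nonneg (norm_nonneg _) (norm_nonneg _)
  have hφint : ∀ a b : ℝ, IntegrableOn φ (Set.Icc a b) μ :=
    fun a b => hφc.integrableOn_Icc
  have hint1 : ∀ a b : ℝ, IntegrableOn (fun s => ‖F s x - F₁ s x‖) (Set.Icc a b) μ :=
    fun a b => (((hFc x).sub (hF₁c x)).norm).integrableOn_Icc
  have hint2 : ∀ a b : ℝ, IntegrableOn (fun s => ‖F s y - F₁ s y‖) (Set.Icc a b) μ :=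
    fun a b => (((hFc y).sub (hF₁c y)).norm).integrableOn_Icc
  have hergφ : MuErgodic μ φ := by
    have hsplit : ∀ r : ℝ, (1 / (μ (Set.Icc (-r) r)).toReal) * ∫ t in Set.Icc (-r) r, φ t ∂μ =
        ((1 / (μ (Set.Icc (-r) r)).toReal) * ∫ t in Set.Icc (-r) r, ‖F t x - F₁ t x‖ ∂μ) +
        ((1 / (μ (Set.Icc (-r) r)).toReal) * ∫ t in Set.Icc (-r) r, ‖F t y - F₁ t y‖ ∂μ) := by
      intro r
      rw [hφ, integral_add (hint1 _ _) (hint2 _ _), mul_add]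
    rw [MuErgodic]
    simp only [hsplit]
    have h := (herg x).add (herg y)
    rw [add_zero] at h
    exact h
  -- the relatively dense family of intervals where φ is large
  set c' : ℝ := K / 2 with hc'
  have hc'0 : 0 < c' := by positivity
  have hD : ∀ a : ℝ, ∃ dd ∈ Set.Icc a (a + l), ∀ s ∈ Set.Icc dd (dd + δ), c' ≤ φ s := by
    intro a
    obtain ⟨τ, hτT, hτI⟩ := hTl (a - t₀)
    refine ⟨t₀ + τ, ⟨by linarith [hτI.1], by linarith [hτI.2]⟩, fun s hs => ?_⟩
    set τ' : ℝ := s - t₀ with hτ'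
    have hττ' : |τ' - τ| ≤ δ := by
      rw [abs_le]
      constructor
      · have := hs.1; simp only [hτ']; linarith
      · have := hs.2; simp only [hτ']; linarith
    -- τ' is a common 2ε-almost period
    have hu2 : ∀ t : ℝ, ‖u (t + τ') - u t‖ ≤ 2*ε := by
      intro t
      have h1 : ‖u (t + τ') - u (t + τ)‖ ≤ ε := by
        refine hUCu _ _ ?_
        have : (t + τ') - (t + τ) = τ' - τ := by ring
        rw [this]
        exact le_trans hττ' (min_le_left _ _)
      have h2 : ‖u (t + τ) - u t‖ ≤ ε := hτT.1 t
      calc ‖u (t + τ') - u t‖ ≤ ‖u (t + τ') - u (t + τ)‖ + ‖u (t + τ) - u t‖ := by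
            have : u (t + τ') - u t = (u (t + τ') - u (t + τ)) + (u (t + τ) - u t) := by abel
            rw [this]; exact norm_add_le _ _
        _ ≤ 2*ε := by linarith
    have hv2 : ∀ t : ℝ, ‖v (t + τ') - v t‖ ≤ 2*ε := by
      intro t
      have h1 : ‖v (t + τ') - v (t + τ)‖ ≤ ε := by
        refine hUCv _ _ ?_
        have : (t + τ') - (t + τ) = τ' - τ := by ring
        rw [this]
        exact le_trans hττ' (min_le_right _ _)
      have h2 : ‖v (t + τ) - v t‖ ≤ ε := hτT.2 t
      calc ‖v (t + τ') - v t‖ ≤ ‖v (t + τ') - v (t + τ)‖ + ‖v (t + τ) - v t‖ := by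
            have : v (t + τ') - v t = (v (t + τ') - v (t + τ)) + (v (t + τ) - v t) := by abel
            rw [this]; exact norm_add_le _ _
        _ ≤ 2*ε := by linarith
    have hst : t₀ + τ' = s := by simp only [hτ']; ring
    have hus : ‖u s - u t₀‖ ≤ 2*ε := by
      have := hu2 t₀; rwa [hst] at this
    have hvs : ‖v s - v t₀‖ ≤ 2*ε := by
      have := hv2 t₀; rwa [hst] at this
    -- ‖u t₀ - v t₀‖ ≤ ‖u s - v s‖ + 4ε
    have h5 : ‖u t₀ - v t₀‖ ≤ ‖u s - v s‖ + 4*ε := by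
      have hid : u t₀ - v t₀ = (u s - v s) - (u s - u t₀) + (v s - v t₀) := by abel
      calc ‖u t₀ - v t₀‖ = ‖(u s - v s) - (u s - u t₀) + (v s - v t₀)‖ := by rw [hid]
        _ ≤ ‖(u s - v s) - (u s - u t₀)‖ + ‖v s - v t₀‖ := norm_add_le _ _
        _ ≤ (‖u s - v s‖ + ‖u s - u t₀‖) + ‖v s - v t₀‖ := by
            gcongr
            exact norm_sub_le _ _
        _ ≤ ‖u s - v s‖ + 4*ε := by linarith
    -- ‖u s - v s‖ ≤ L‖x-y‖ + φ s
    have h6 : ‖u s - v s‖ ≤ L * ‖x - y‖ + φ s := by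
      have hid : u s - v s = (F s x - F s y) + (-(F s x - u s)) + (F s y - v s) := by abel
      calc ‖u s - v s‖ = ‖(F s x - F s y) + (-(F s x - u s)) + (F s y - v s)‖ := by rw [hid]
        _ ≤ ‖(F s x - F s y) + (-(F s x - u s))‖ + ‖F s y - v s‖ := norm_add_le _ _
        _ ≤ (‖F s x - F s y‖ + ‖F s x - u s‖) + ‖F s y - v s‖ := by
            gcongr
            refine le_trans (norm_add_le _ _) ?_
            rw [norm_neg]
        _ ≤ L * ‖x - y‖ + φ s := by
            have := hlip s x y
            simp only [hφ, hu, hv]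
            linarith
    have hKs : K + L * ‖x - y‖ = ‖u t₀ - v t₀‖ := by rw [hK]; ring
    have : K - 4*ε ≤ φ s := by linarith
    simp only [hc', hε] at *
    linarith
  exact absurd (keyLemma μ hμ1 hμ2 hμH φ hφ0 hφint c' hc'0 δ l hδ0 hl0 hD hergφ) not_false
end

section
/- Let g(t) = 2 + cos t + cos(√2·t) and H(t) = sin(1/g(t)). Then: (i) g(t) > 0 for every t ∈ ℝ, so H is differentiable on ℝ with derivative h := H'; (ii) for every t ∈ ℝ, the limit x(t) := lim_{a→-∞} ∫_a^t e^{s-t} h(s) ds exists and equals H(t) - ∫_{-∞}^t e^{s-t} H(s) ds; (iii) x is differentiable and satisfies x'(t) = -x(t) + h(t) for every t ∈ ℝ; (iv) |x(t)| ≤ 2 for every t ∈ ℝ; (v) x is the unique bounded solution: if y : ℝ → ℝ is bounded and differentiable with y'(t) = -y(t) + h(t) for all t, then y = x. -/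
open MeasureTheory Filter Topology

/-- `g(t) = 2 + cos t + cos(√2 t)`. -/
noncomputable def gfun (t : ℝ) : ℝ := 2 + Real.cos t + Real.cos (Real.sqrt 2 * t)

/-- The Levitan function `H(t) = sin(1/g(t))`. -/
noncomputable def Hfun (t : ℝ) : ℝ := Real.sin (1 / gfun t)

/-- `x(t) = H(t) - ∫_{-∞}^t e^{s-t} H(s) ds`. -/
noncomputable def xfun (t : ℝ) : ℝ := Hfun t - ∫ s in Set.Iic t, Real.exp (s - t) * Hfun s

namespace Stmt15Aux

lemma gfun_pos (t : ℝ) : 0 < gfun t := by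
  have h1 : -1 ≤ Real.cos t := Real.neg_one_le_cos t
  have h2 : -1 ≤ Real.cos (Real.sqrt 2 * t) := Real.neg_one_le_cos _
  rcases h1.lt_or_eq with h | h
  · unfold gfun; linarith
  · have hne : Real.cos (Real.sqrt 2 * t) ≠ -1 := by
      intro hc
      obtain ⟨k, hk⟩ := Real.cos_eq_neg_one_iff.mp h.symm
      obtain ⟨m, hm⟩ := Real.cos_eq_neg_one_iff.mp hc
      have hπ : (Real.pi : ℝ) ≠ 0 := Real.pi_ne_zero
      have h1' : Real.sqrt 2 * ((2*(k:ℝ)+1) * Real.pi) = (2*(m:ℝ)+1) * Real.pi := by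
        rw [show (2*(k:ℝ)+1) * Real.pi = t by linarith [hk],
            show (2*(m:ℝ)+1) * Real.pi = Real.sqrt 2 * t by linarith [hm]]
      rw [← mul_assoc] at h1'
      have key : Real.sqrt 2 * (2*(k:ℝ)+1) = 2*(m:ℝ)+1 := mul_right_cancel₀ hπ h1'
      have hk0 : (2*(k:ℝ)+1) ≠ 0 := by
        exact_mod_cast Int.cast_ne_zero.mpr (by omega : (2*k+1 : ℤ) ≠ 0)
      apply irrational_sqrt_two
      refine ⟨(((2*m+1 : ℤ) : ℚ) / ((2*k+1 : ℤ) : ℚ)), ?_⟩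
      push_cast
      rw [eq_comm, eq_div_iff hk0]
      linarith [key]
    have h2' : -1 < Real.cos (Real.sqrt 2 * t) := lt_of_le_of_ne h2 (Ne.symm hne)
    unfold gfun; linarith

lemma contDiff_g : ContDiff ℝ ⊤ gfun := by
  have : ContDiff ℝ ⊤ fun t : ℝ => Real.cos (Real.sqrt 2 * t) :=
    Real.contDiff_cos.comp (contDiff_const.mul contDiff_id)
  exact (contDiff_const.add Real.contDiff_cos).add this

lemma contDiff_H : ContDiff ℝ ⊤ Hfun :=
  Real.contDiff_sin.comp (contDiff_const.div contDiff_g fun t => (gfun_pos t).ne')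

lemma diff_H : Differentiable ℝ Hfun := contDiff_H.differentiable (by simp)

lemma cont_H : Continuous Hfun := contDiff_H.continuous

lemma cont_dH : Continuous (deriv Hfun) := contDiff_H.continuous_deriv le_top

lemma absH (t : ℝ) : |Hfun t| ≤ 1 :=
  abs_le.mpr ⟨Real.neg_one_le_sin _, Real.sin_le_one _⟩

lemma exp_shift (t s : ℝ) : Real.exp (s - t) = Real.exp (-t) * Real.exp s := by
  rw [← Real.exp_add, show -t + s = s - t by ring]

lemma intExp (t a : ℝ) : IntegrableOn (fun s => Real.exp (s - t)) (Set.Iic a) := by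
  have : (fun s => Real.exp (s - t)) = fun s => Real.exp (-t) * Real.exp s :=
    funext fun s => exp_shift t s
  rw [this]
  exact (integrableOn_exp_Iic a).const_mul _

lemma intExpVal (t a : ℝ) : ∫ s in Set.Iic a, Real.exp (s - t) = Real.exp (a - t) := by
  simp_rw [exp_shift t]
  rw [MeasureTheory.integral_const_mul, integral_exp_Iic, ← Real.exp_add,
    show -t + a = a - t by ring]

lemma intOn (t a : ℝ) : IntegrableOn (fun s => Real.exp (s - t) * Hfun s) (Set.Iic a) := by
  refine (intExp t a).mono' ?_ (Filter.Eventually.of_forall fun s => ?_)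
  · exact ((Real.continuous_exp.comp (continuous_id.sub continuous_const)).mul
      cont_H).aestronglyMeasurable
  · rw [norm_mul, Real.norm_eq_abs, Real.norm_eq_abs, abs_of_pos (Real.exp_pos _)]
    nlinarith [absH s, Real.exp_pos (s - t), abs_nonneg (Hfun s)]

lemma normI (t a : ℝ) : ‖∫ s in Set.Iic a, Real.exp (s - t) * Hfun s‖ ≤ Real.exp (a - t) := by
  calc ‖∫ s in Set.Iic a, Real.exp (s - t) * Hfun s‖
      ≤ ∫ s in Set.Iic a, Real.exp (s - t) :=
        norm_integral_le_of_norm_le (intExp t a) (Filter.Eventually.of_forall fun s => by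
          rw [norm_mul, Real.norm_eq_abs, Real.norm_eq_abs, abs_of_pos (Real.exp_pos _)]
          nlinarith [absH s, Real.exp_pos (s - t), abs_nonneg (Hfun s)])
    _ = Real.exp (a - t) := intExpVal t a

noncomputable def Ffun (t : ℝ) : ℝ := ∫ s in Set.Iic t, Real.exp s * Hfun s

lemma intOnF (a : ℝ) : IntegrableOn (fun s => Real.exp s * Hfun s) (Set.Iic a) := by
  simpa using intOn 0 a

lemma hasDerivF (t : ℝ) : HasDerivAt Ffun (Real.exp t * Hfun t) t := by
  have hcont : Continuous (fun s => Real.exp s * Hfun s) := Real.continuous_exp.mul cont_H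
  have heq : ∀ u, Ffun u = Ffun 0 + ∫ s in (0:ℝ)..u, Real.exp s * Hfun s := by
    intro u
    rw [← intervalIntegral.integral_Iic_sub_Iic (intOnF 0) (intOnF u)]
    unfold Ffun; ring
  have hd := (intervalIntegral.integral_hasDerivAt_right (hcont.intervalIntegrable 0 t)
      (hcont.stronglyMeasurableAtFilter _ _) hcont.continuousAt).const_add (Ffun 0)
  rw [show Ffun = fun u => Ffun 0 + ∫ s in (0:ℝ)..u, Real.exp s * Hfun s from funext heq]
  exact hd

lemma xfun_eq (t : ℝ) : xfun t = Hfun t - Real.exp (-t) * Ffun t := by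
  unfold xfun Ffun
  congr 1
  simp_rw [fun s => exp_shift t s, mul_assoc]
  rw [MeasureTheory.integral_const_mul]

lemma hasDeriv_x (t : ℝ) : HasDerivAt xfun (-(xfun t) + deriv Hfun t) t := by
  have hH : HasDerivAt Hfun (deriv Hfun t) t := (diff_H t).hasDerivAt
  have hexp : HasDerivAt (fun u : ℝ => Real.exp (-u)) (-Real.exp (-t)) t := by
    have h := (Real.hasDerivAt_exp (-t)).comp t ((hasDerivAt_id t).neg)
    simp at h
    exact h
  have hx : HasDerivAt (fun u => Hfun u - Real.exp (-u) * Ffun u)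
      (deriv Hfun t - (-Real.exp (-t) * Ffun t + Real.exp (-t) * (Real.exp t * Hfun t))) t :=
    hH.sub (hexp.mul (hasDerivF t))
  have hval : -(xfun t) + deriv Hfun t
      = deriv Hfun t - (-Real.exp (-t) * Ffun t + Real.exp (-t) * (Real.exp t * Hfun t)) := by
    have hee : Real.exp (-t) * Real.exp t = 1 := by rw [← Real.exp_add]; simp
    rw [xfun_eq t]
    linear_combination Hfun t * hee
  rw [hval, show xfun = fun u => Hfun u - Real.exp (-u) * Ffun u from funext xfun_eq]
  exact hx

lemma tendsto_exp_shift (t : ℝ) : Tendsto (fun a => Real.exp (a - t)) atBot (𝓝 0) := by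
  have : Tendsto (fun a : ℝ => a - t) atBot atBot := tendsto_atBot_add_const_right _ (-t) tendsto_id
  exact Real.tendsto_exp_atBot.comp this

lemma tendsto_x (t : ℝ) :
    Tendsto (fun a : ℝ => ∫ s in a..t, Real.exp (s - t) * deriv Hfun s) atBot (𝓝 (xfun t)) := by
  set I : ℝ → ℝ := fun a => ∫ s in Set.Iic a, Real.exp (s - t) * Hfun s with hI
  have key : ∀ a : ℝ, ∫ s in a..t, Real.exp (s - t) * deriv Hfun s
      = Hfun t - Real.exp (a - t) * Hfun a - (I t - I a) := by
    intro a
    have hu : ∀ x ∈ Set.uIcc a t, HasDerivAt (fun s => Real.exp (s - t)) (Real.exp (x - t)) x := by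
      intro x _
      have h := (Real.hasDerivAt_exp (x - t)).comp x ((hasDerivAt_id x).sub_const t)
      simp at h
      exact h
    have hv : ∀ x ∈ Set.uIcc a t, HasDerivAt Hfun (deriv Hfun x) x :=
      fun x _ => (diff_H x).hasDerivAt
    have hiu : IntervalIntegrable (fun s => Real.exp (s - t)) MeasureTheory.volume a t :=
      (Real.continuous_exp.comp (continuous_id.sub continuous_const)).intervalIntegrable a t
    have hiv : IntervalIntegrable (deriv Hfun) MeasureTheory.volume a t :=
      cont_dH.intervalIntegrable a t
    have ibp := intervalIntegral.integral_mul_deriv_eq_deriv_mul hu hv hiu hiv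
    rw [ibp, ← intervalIntegral.integral_Iic_sub_Iic (intOn t a) (intOn t t)]
    simp [sub_self, hI]
  have h1 := tendsto_exp_shift t
  have h2 : Tendsto (fun a => Real.exp (a - t) * Hfun a) atBot (𝓝 0) := by
    refine squeeze_zero_norm (fun a => ?_) h1
    rw [norm_mul, Real.norm_eq_abs, Real.norm_eq_abs, abs_of_pos (Real.exp_pos _)]
    nlinarith [absH a, Real.exp_pos (a - t), abs_nonneg (Hfun a)]
  have h3 : Tendsto I atBot (𝓝 0) := squeeze_zero_norm (fun a => normI t a) h1
  have hmain : Tendsto (fun a => Hfun t - Real.exp (a - t) * Hfun a - (I t - I a)) atBot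
      (𝓝 (Hfun t - 0 - (I t - 0))) :=
    (tendsto_const_nhds.sub h2).sub (tendsto_const_nhds.sub h3)
  rw [show xfun t = Hfun t - 0 - (I t - 0) by simp [xfun, hI]]
  exact hmain.congr fun a => (key a).symm

lemma abs_x (t : ℝ) : |xfun t| ≤ 2 := by
  have h2 : |∫ s in Set.Iic t, Real.exp (s - t) * Hfun s| ≤ 1 := by
    have := normI t t
    rw [Real.norm_eq_abs] at this
    simpa using this
  have l1 := abs_le.mp (absH t)
  have l2 := abs_le.mp h2
  rw [abs_le]
  unfold xfun
  constructor <;> linarith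

lemma unique (y : ℝ → ℝ) (hb : ∃ C : ℝ, ∀ t : ℝ, |y t| ≤ C)
    (hy : ∀ t : ℝ, HasDerivAt y (-(y t) + deriv Hfun t) t) : y = xfun := by
  obtain ⟨C, hC⟩ := hb
  set w : ℝ → ℝ := fun t => y t - xfun t with hw
  have hwd : ∀ t, HasDerivAt w (-(w t)) t := by
    intro t
    have := (hy t).sub (hasDeriv_x t)
    convert this using 1
    · rfl
    · rfl
    · rfl
    simp [hw]; ring
  have hφ : ∀ t, HasDerivAt (fun u => Real.exp u * w u) 0 t := by
    intro t
    have := (Real.hasDerivAt_exp t).mul (hwd t)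
    convert this using 1
    · rfl
    · rfl
    · rfl
    ring
  have hconst : ∀ t, Real.exp t * w t = w 0 := by
    intro t
    have := is_const_of_deriv_eq_zero (f := fun u => Real.exp u * w u)
      (fun u => (hφ u).differentiableAt) (fun u => (hφ u).deriv) t 0
    simpa using this
  have hw0 : w 0 = 0 := by
    have hbound : ∀ t : ℝ, |w 0| ≤ Real.exp t * (C + 2) := by
      intro t
      rw [← hconst t, abs_mul, abs_of_pos (Real.exp_pos t)]
      have h1 : |w t| ≤ C + 2 := by
        have hx := abs_x t
        have hyb := hC t
        calc |w t| ≤ |y t| + |xfun t| := abs_sub _ _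
          _ ≤ C + 2 := by linarith
      exact mul_le_mul_of_nonneg_left h1 (Real.exp_pos t).le
    have hlim : Tendsto (fun t : ℝ => Real.exp t * (C + 2)) atBot (𝓝 0) := by
      simpa using Real.tendsto_exp_atBot.mul_const (C + 2)
    have : |w 0| ≤ 0 := ge_of_tendsto' hlim hbound
    exact abs_nonpos_iff.mp this
  funext t
  have h := hconst t
  rw [hw0] at h
  rcases mul_eq_zero.mp h with h' | h'
  · exact absurd h' (Real.exp_ne_zero t)
  · have : y t - xfun t = 0 := h'
    linarith

end Stmt15Aux

/-- (i) `g > 0` everywhere, so `H` is differentiable with derivative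
`h = H'`; (ii) for every `t`, `lim_{a→-∞} ∫_a^t e^{s-t} h(s) ds` exists and equals
`x(t) = H(t) - ∫_{-∞}^t e^{s-t} H(s) ds`; (iii) `x' = -x + h`; (iv) `|x| ≤ 2`;
(v) `x` is the unique bounded solution of `y' = -y + h`. -/
theorem stmt15 :
    (∀ t : ℝ, 0 < gfun t) ∧
    (∀ t : ℝ, DifferentiableAt ℝ Hfun t) ∧
    (∀ t : ℝ, Tendsto (fun a : ℝ => ∫ s in a..t, Real.exp (s - t) * deriv Hfun s)
      atBot (𝓝 (xfun t))) ∧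
    (∀ t : ℝ, HasDerivAt xfun (-(xfun t) + deriv Hfun t) t) ∧
    (∀ t : ℝ, |xfun t| ≤ 2) ∧
    (∀ y : ℝ → ℝ, (∃ C : ℝ, ∀ t : ℝ, |y t| ≤ C) →
      (∀ t : ℝ, HasDerivAt y (-(y t) + deriv Hfun t) t) → y = xfun) :=
  ⟨Stmt15Aux.gfun_pos, Stmt15Aux.diff_H, Stmt15Aux.tendsto_x, Stmt15Aux.hasDeriv_x,
    Stmt15Aux.abs_x, Stmt15Aux.unique⟩
end
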